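/- arXiv:2412.09095 — 3 statements merged into one kernel-verified Lean document; each statement's English description precedes it below -/
import Mathlib

section
/- Let q ≥ 2 and m with 1 ≤ m ≤ q be integers. There exists a constant C > 0, depending only on q and m, such that for all real numbers a < b, every m-times continuously differentiable function w : [a, b] → ℝ, and every real polynomial g of degree at most q − 1 satisfying g(b) = w(b) and ∫_a^b (g(t) − w(t))·r(t) dt = 0 for every real polynomial r of degree at most q − 2, one has (∫_a^b (w(t) − g(t))² dt)^{1/2} ≤ C·(b − a)^m·(∫_a^b (w^{(m)}(t))² dt)^{1/2}, where w^{(m)} denotes the m-th derivative of w. -/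
open MeasureTheory
open Polynomial Set intervalIntegral

lemma contOn_integrableOn {f : ℝ → ℝ} {a b : ℝ} (hf : ContinuousOn f (Set.Icc a b)) :
    IntegrableOn f (Set.Ioo a b) := (hf.integrableOn_Icc).mono_set Set.Ioo_subset_Icc_self

lemma integral_Ioo_poly_comp (P : Polynomial ℝ) {a b : ℝ} (hab : a < b) :
    ∫ t in Set.Ioo a b, P.eval t =
      (b - a) * ∫ s in Set.Ioo (0:ℝ) 1,
        (P.comp (Polynomial.C a + Polynomial.C (b-a) * Polynomial.X)).eval s := by
  have hne : b - a ≠ 0 := sub_ne_zero.mpr hab.ne'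
  have h1 : ∫ t in Set.Ioo a b, P.eval t = ∫ t in a..b, P.eval t := by
    rw [intervalIntegral.integral_of_le hab.le, integral_Ioc_eq_integral_Ioo]
  have h2 : ∫ s in Set.Ioo (0:ℝ) 1,
      (P.comp (Polynomial.C a + Polynomial.C (b-a) * Polynomial.X)).eval s
      = ∫ s in (0:ℝ)..1, P.eval ((b-a) * s + a) := by
    rw [intervalIntegral.integral_of_le (by norm_num : (0:ℝ) ≤ 1), integral_Ioc_eq_integral_Ioo]
    apply setIntegral_congr_fun measurableSet_Ioo
    intro s _
    simp [Polynomial.eval_comp]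
    ring_nf
  rw [h1, h2, intervalIntegral.integral_comp_mul_add (fun x => P.eval x) hne a]
  rw [smul_eq_mul, ← mul_assoc, mul_inv_cancel₀ hne, one_mul]
  norm_num

lemma abs_integral_le_sqrt_mul_sqrt {f : ℝ → ℝ} {a b : ℝ} (hab : a < b)
    (hf : IntegrableOn f (Set.Ioo a b)) (hf2 : IntegrableOn (fun t => f t ^ 2) (Set.Ioo a b)) :
    ∫ t in Set.Ioo a b, |f t| ≤
      Real.sqrt (b - a) * Real.sqrt (∫ t in Set.Ioo a b, f t ^ 2) := by
  set I := ∫ t in Set.Ioo a b, f t ^ 2 with hI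
  have hInn : 0 ≤ I := setIntegral_nonneg measurableSet_Ioo (fun t _ => sq_nonneg _)
  have hvol : (volume (Set.Ioo a b)).toReal = b - a := by
    rw [Real.volume_Ioo, ENNReal.toReal_ofReal (by linarith)]
  rcases eq_or_lt_of_le hInn with h0 | hIpos
  · -- I = 0 : f = 0 a.e.
    have hz : (fun t => f t ^ 2) =ᵐ[volume.restrict (Set.Ioo a b)] 0 := by
      rw [← integral_eq_zero_iff_of_nonneg_ae (Filter.Eventually.of_forall (fun t => sq_nonneg _)) hf2]
      exact h0.symm
    have : (fun t => |f t|) =ᵐ[volume.restrict (Set.Ioo a b)] 0 := by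
      filter_upwards [hz] with t ht
      simp only [Pi.zero_apply] at ht ⊢
      have := pow_eq_zero_iff (n := 2) (by norm_num) |>.mp ht
      simp [this]
    rw [integral_congr_ae this]
    simp [← h0]
  · set ε := Real.sqrt I / Real.sqrt (b - a) with hε
    have hbapos : (0:ℝ) < b - a := by linarith
    have hεpos : 0 < ε := div_pos (Real.sqrt_pos.mpr hIpos) (Real.sqrt_pos.mpr hbapos)
    have hpt : ∀ t ∈ Set.Ioo a b, |f t| ≤ (f t ^ 2 / ε + ε) / 2 := by
      intro t _
      have h := sq_nonneg (|f t| - ε)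
      have habs : |f t| ^ 2 = f t ^ 2 := sq_abs _
      have key : |f t| ≤ (f t ^ 2 + ε ^ 2) / (2 * ε) := by
        rw [le_div_iff₀ (by positivity)]
        nlinarith
      have heq : (f t ^ 2 + ε ^ 2) / (2 * ε) = (f t ^ 2 / ε + ε) / 2 := by
        field_simp
      linarith [heq ▸ key]
    have hint : IntegrableOn (fun t => (f t ^ 2 / ε + ε) / 2) (Set.Ioo a b) := by
      apply Integrable.div_const
      exact (hf2.div_const ε).add ((integrableOn_const_iff (C := ε)).mpr (Or.inr (by simp [Real.volume_Ioo])))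
    calc ∫ t in Set.Ioo a b, |f t|
        ≤ ∫ t in Set.Ioo a b, (f t ^ 2 / ε + ε) / 2 :=
          setIntegral_mono_on hf.abs hint measurableSet_Ioo hpt
      _ = ((∫ t in Set.Ioo a b, f t ^ 2) / ε + ε * (b - a)) / 2 := by
          rw [MeasureTheory.integral_div, MeasureTheory.integral_add (hf2.div_const ε)
            ((integrableOn_const_iff (C := ε)).mpr (Or.inr (by simp [Real.volume_Ioo])))]
          rw [MeasureTheory.integral_div, setIntegral_const, measureReal_def, hvol, smul_eq_mul, mul_comm]
      _ = Real.sqrt (b - a) * Real.sqrt I := by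
          rw [hε, ← hI]
          have h1 : Real.sqrt I ^ 2 = I := Real.sq_sqrt hInn
          have h2 : Real.sqrt (b-a) ^ 2 = b - a := Real.sq_sqrt hbapos.le
          have hs1 : Real.sqrt I > 0 := Real.sqrt_pos.mpr hIpos
          have hs2 : Real.sqrt (b-a) > 0 := Real.sqrt_pos.mpr hbapos
          field_simp
          nlinarith [h1, h2, hs1, hs2]

-- injectivity: zero moments + root at 1 forces the polynomial to vanish
lemma key_injective (n : ℕ) (h : Polynomial ℝ) (hdeg : h.natDegree ≤ n) (h1 : h.eval 1 = 0)
    (hmom : ∀ j < n, ∫ s in Set.Ioo (0:ℝ) 1, h.eval s * s ^ j = 0) : h = 0 := by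
  obtain ⟨k, hk⟩ : (X - C 1) ∣ h := (dvd_iff_isRoot).mpr h1
  rcases eq_or_ne k 0 with hk0 | hk0
  · rw [hk, hk0, mul_zero]
  exfalso
  have hXC : (X - C (1:ℝ)) ≠ 0 := X_sub_C_ne_zero 1
  have hdegk : k.natDegree < n := by
    have := natDegree_mul hXC hk0
    rw [← hk, natDegree_X_sub_C] at this
    omega
  -- ∫ h k = 0
  have hint : ∀ j : ℕ, IntegrableOn (fun s => h.eval s * s ^ j) (Set.Ioo (0:ℝ) 1) := by
    intro j
    exact contOn_integrableOn (((h.continuous).mul (continuous_pow j)).continuousOn)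
  have hhk : ∫ s in Set.Ioo (0:ℝ) 1, h.eval s * k.eval s = 0 := by
    have hexp : ∀ s : ℝ, h.eval s * k.eval s
        = ∑ j ∈ Finset.range n, k.coeff j * (h.eval s * s ^ j) := by
      intro s
      rw [eval_eq_sum_range' hdegk, Finset.mul_sum]
      apply Finset.sum_congr rfl
      intro j _; ring
    simp_rw [hexp]
    rw [integral_finset_sum _ (fun j _ => (hint j).const_mul _)]
    apply Finset.sum_eq_zero
    intro j hj
    rw [MeasureTheory.integral_const_mul, hmom j (Finset.mem_range.mp hj), mul_zero]
  -- the nonnegative integrand (1-s) k(s)^2 has zero integral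
  set f : ℝ → ℝ := fun s => (1 - s) * k.eval s ^ 2 with hf
  have hfcont : Continuous f := (continuous_const.sub continuous_id).mul ((k.continuous).pow 2)
  have hfint : IntegrableOn f (Set.Ioo (0:ℝ) 1) :=
    contOn_integrableOn hfcont.continuousOn
  have hfeq : ∫ s in Set.Ioo (0:ℝ) 1, f s = 0 := by
    have : ∀ s : ℝ, f s = -(h.eval s * k.eval s) := by
      intro s
      rw [hf, hk]
      simp [eval_mul, eval_sub, eval_X, eval_C]
      ring
    simp_rw [this]
    rw [MeasureTheory.integral_neg, hhk, neg_zero]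
  have hfnn : ∀ s ∈ Set.Ioo (0:ℝ) 1, 0 ≤ f s := by
    intro s hs
    have : 0 ≤ 1 - s := by linarith [hs.2]
    positivity
  have hae : f =ᵐ[volume.restrict (Set.Ioo (0:ℝ) 1)] 0 := by
    rw [← integral_eq_zero_iff_of_nonneg_ae _ hfint]
    · exact hfeq
    · exact (ae_restrict_iff' measurableSet_Ioo).mpr (Filter.Eventually.of_forall hfnn)
  -- measure-theoretic contradiction: roots of a nonzero polynomial are finite
  have hpoly : ((C 1 - X) * k ^ 2 : Polynomial ℝ) ≠ 0 := by
    apply mul_ne_zero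
    · intro hc
      have := congrArg (Polynomial.eval 0) hc
      simp at this
    · exact pow_ne_zero _ hk0
  have hroots : {s : ℝ | f s = 0}.Finite := by
    have : {s : ℝ | f s = 0} = {s : ℝ | ((C 1 - X) * k ^ 2 : Polynomial ℝ).IsRoot s} := by
      ext s; simp [hf, IsRoot, eval_mul, eval_pow, eval_sub, eval_C, eval_X]
    rw [this]
    exact Polynomial.finite_setOf_isRoot hpoly
  -- from hae: the set where f ≠ 0 inside Ioo has measure zero
  have hm0 : volume ({s : ℝ | f s ≠ 0} ∩ Set.Ioo (0:ℝ) 1) = 0 := by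
    have := Filter.eventuallyEq_iff_exists_mem.mp hae
    have h2 : volume.restrict (Set.Ioo (0:ℝ) 1) {s | f s ≠ 0} = 0 := by
      have := hae
      rw [Filter.EventuallyEq, ae_iff] at this
      simpa using this
    have hms : MeasurableSet {s : ℝ | f s ≠ 0} :=
      (isClosed_eq hfcont continuous_const).measurableSet.compl
    rwa [Measure.restrict_apply hms] at h2
  have hcover : Set.Ioo (0:ℝ) 1 ⊆ ({s : ℝ | f s ≠ 0} ∩ Set.Ioo (0:ℝ) 1) ∪ {s : ℝ | f s = 0} := by
    intro s hs
    by_cases hfs : f s = 0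
    · exact Or.inr hfs
    · exact Or.inl ⟨hfs, hs⟩
  have : volume (Set.Ioo (0:ℝ) 1) ≤ 0 := by
    calc volume (Set.Ioo (0:ℝ) 1)
        ≤ volume (({s : ℝ | f s ≠ 0} ∩ Set.Ioo (0:ℝ) 1) ∪ {s : ℝ | f s = 0}) :=
          measure_mono hcover
      _ ≤ volume ({s : ℝ | f s ≠ 0} ∩ Set.Ioo (0:ℝ) 1) + volume {s : ℝ | f s = 0} :=
          measure_union_le _ _
      _ = 0 := by rw [hm0, hroots.measure_zero, add_zero]
  simp [Real.volume_Ioo] at this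

lemma integral_Ioo_pow (k : ℕ) : ∫ s in Set.Ioo (0:ℝ) 1, s ^ k = ((k:ℝ) + 1)⁻¹ := by
  rw [← integral_Ioc_eq_integral_Ioo, ← intervalIntegral.integral_of_le zero_le_one,
    integral_pow]
  simp [div_eq_mul_inv]

lemma refB (n : ℕ) : ∃ C : ℝ, 0 < C ∧ ∀ h : Polynomial ℝ, h.natDegree ≤ n → h.eval 1 = 0 →
    (∫ s in Set.Ioo (0:ℝ) 1, (h.eval s)^2) ≤
      C * ∑ j ∈ Finset.range n, (∫ s in Set.Ioo (0:ℝ) 1, h.eval s * s^j)^2 := by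
  classical
  set N := n + 1 with hN
  set Pc : (Fin N → ℝ) → Polynomial ℝ := fun c => ∑ i : Fin N, monomial (i:ℕ) (c i) with hPc
  have heval : ∀ c (s : ℝ), (Pc c).eval s = ∑ i : Fin N, c i * s ^ (i:ℕ) := by
    intro c s; rw [hPc]; simp [eval_finset_sum]
  have hdegPc : ∀ c, (Pc c).natDegree ≤ n := by
    intro c
    apply natDegree_sum_le_of_forall_le
    intro i _
    exact le_trans (natDegree_monomial_le _) (by omega)
  have hcoeff : ∀ c (i : Fin N), (Pc c).coeff (i:ℕ) = c i := by
    intro c i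
    rw [hPc, finset_sum_coeff]
    rw [Finset.sum_eq_single i]
    · simp [coeff_monomial]
    · intro j _ hji
      simp [coeff_monomial, Fin.val_eq_val, hji]
    · simp
  set A : (Fin N → ℝ) → ℝ := fun c => ∫ s in Set.Ioo (0:ℝ) 1, ((Pc c).eval s)^2 with hAdef
  set Bf : (Fin N → ℝ) → ℝ := fun c =>
    (∑ j ∈ Finset.range n, (∫ s in Set.Ioo (0:ℝ) 1, (Pc c).eval s * s^j)^2)
      + ((Pc c).eval 1)^2 with hBdef
  -- explicit formulas
  have hA : ∀ c, A c = ∑ i : Fin N, ∑ j : Fin N,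
      c i * c j * (((i:ℕ):ℝ) + ((j:ℕ):ℝ) + 1)⁻¹ := by
    intro c
    rw [hAdef]
    simp only
    have hexp : ∀ s : ℝ, ((Pc c).eval s)^2
        = ∑ i : Fin N, ∑ j : Fin N, (c i * c j) * s ^ ((i:ℕ) + (j:ℕ)) := by
      intro s
      rw [heval, sq, Finset.sum_mul_sum]
      apply Finset.sum_congr rfl; intro i _
      apply Finset.sum_congr rfl; intro j _
      rw [pow_add]; ring
    simp_rw [hexp]
    rw [MeasureTheory.integral_finset_sum _ (fun i _ => integrable_finset_sum (μ := volume.restrict (Set.Ioo (0:ℝ) 1)) _ (fun j _ =>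
      ((continuous_const.fun_mul (continuous_pow _)).continuousOn.integrableOn_Icc).mono_set
        Set.Ioo_subset_Icc_self))]
    apply Finset.sum_congr rfl; intro i _
    rw [MeasureTheory.integral_finset_sum _ (fun j _ =>
      ((continuous_const.fun_mul (continuous_pow _)).continuousOn.integrableOn_Icc).mono_set
        Set.Ioo_subset_Icc_self)]
    apply Finset.sum_congr rfl; intro j _
    rw [MeasureTheory.integral_const_mul, integral_Ioo_pow]
    push_cast
    ring
  have hmu : ∀ c (j : ℕ), (∫ s in Set.Ioo (0:ℝ) 1, (Pc c).eval s * s^j)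
      = ∑ i : Fin N, c i * (((i:ℕ):ℝ) + (j:ℝ) + 1)⁻¹ := by
    intro c j
    have hexp : ∀ s : ℝ, (Pc c).eval s * s^j
        = ∑ i : Fin N, c i * s ^ ((i:ℕ) + j) := by
      intro s
      rw [heval, Finset.sum_mul]
      apply Finset.sum_congr rfl; intro i _
      rw [pow_add]; ring
    simp_rw [hexp]
    rw [MeasureTheory.integral_finset_sum _ (fun i _ =>
      ((continuous_const.fun_mul (continuous_pow _)).continuousOn.integrableOn_Icc).mono_set
        Set.Ioo_subset_Icc_self)]
    apply Finset.sum_congr rfl; intro i _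
    rw [MeasureTheory.integral_const_mul, integral_Ioo_pow]
    push_cast
    ring
  have hone : ∀ c, (Pc c).eval 1 = ∑ i : Fin N, c i := by
    intro c; rw [heval]; simp
  -- continuity
  have hAcont : Continuous A := by
    have : A = fun c => ∑ i : Fin N, ∑ j : Fin N,
        c i * c j * (((i:ℕ):ℝ) + ((j:ℕ):ℝ) + 1)⁻¹ := funext hA
    rw [this]
    exact continuous_finset_sum _ (fun i _ => continuous_finset_sum _ (fun j _ =>
      ((continuous_apply i).mul (continuous_apply j)).mul continuous_const))
  have hBcont : Continuous Bf := by
    have : Bf = fun c => (∑ j ∈ Finset.range n,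
        (∑ i : Fin N, c i * (((i:ℕ):ℝ) + (j:ℝ) + 1)⁻¹)^2) + (∑ i : Fin N, c i)^2 := by
      funext c
      rw [hBdef]
      simp only
      rw [hone]
      congr 1
      apply Finset.sum_congr rfl; intro j _
      rw [hmu]
    rw [this]
    apply Continuous.add
    · exact continuous_finset_sum _ (fun j _ =>
        (continuous_finset_sum _ (fun i _ => (continuous_apply i).mul continuous_const)).pow 2)
    · exact (continuous_finset_sum _ (fun i _ => continuous_apply i)).pow 2
  -- nonnegativity
  have hAnn : ∀ c, 0 ≤ A c := fun c =>
    setIntegral_nonneg measurableSet_Ioo (fun s _ => sq_nonneg _)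
  have hBnn : ∀ c, 0 ≤ Bf c := fun c =>
    add_nonneg (Finset.sum_nonneg (fun j _ => sq_nonneg _)) (sq_nonneg _)
  -- homogeneity
  have hAhom : ∀ (t : ℝ) c, A (t • c) = t^2 * A c := by
    intro t c
    rw [hA, hA, Finset.mul_sum]
    apply Finset.sum_congr rfl; intro i _
    rw [Finset.mul_sum]
    apply Finset.sum_congr rfl; intro j _
    simp only [Pi.smul_apply, smul_eq_mul]
    ring
  have hBhom : ∀ (t : ℝ) c, Bf (t • c) = t^2 * Bf c := by
    intro t c
    rw [hBdef]
    simp only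
    rw [hone, hone, mul_add]
    congr 1
    · rw [Finset.mul_sum]
      apply Finset.sum_congr rfl; intro j _
      rw [hmu, hmu]
      have : ∑ i : Fin N, (t • c) i * (((i:ℕ):ℝ) + (j:ℝ) + 1)⁻¹
          = t * ∑ i : Fin N, c i * (((i:ℕ):ℝ) + (j:ℝ) + 1)⁻¹ := by
        rw [Finset.mul_sum]
        apply Finset.sum_congr rfl; intro i _
        simp only [Pi.smul_apply, smul_eq_mul]; ring
      rw [this]; ring
    · have : ∑ i : Fin N, (t • c) i = t * ∑ i : Fin N, c i := by
        rw [Finset.mul_sum]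
        apply Finset.sum_congr rfl; intro i _
        simp only [Pi.smul_apply, smul_eq_mul]
      rw [this]; ring
  -- compactness
  set S := Metric.sphere (0 : Fin N → ℝ) 1 with hS
  have hScomp : IsCompact S := isCompact_sphere 0 1
  have hSne : S.Nonempty := NormedSpace.sphere_nonempty.mpr zero_le_one
  obtain ⟨cM, hcM, hMmax⟩ := hScomp.exists_isMaxOn hSne hAcont.continuousOn
  obtain ⟨cd, hcd, hdmin⟩ := hScomp.exists_isMinOn hSne hBcont.continuousOn
  set M := A cM with hM
  set δ := Bf cd with hδ
  have hδpos : 0 < δ := by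
    rcases lt_or_eq_of_le (hBnn cd) with h | h
    · exact h
    exfalso
    -- Bf cd = 0 : extract vanishing moments and eval
    have hadd : (∑ j ∈ Finset.range n,
        (∫ s in Set.Ioo (0:ℝ) 1, (Pc cd).eval s * s^j)^2) + ((Pc cd).eval 1)^2 = 0 := by
      have h' := h.symm
      rw [hBdef] at h'
      exact h'
    have hs := Finset.sum_nonneg (fun j (_ : j ∈ Finset.range n) =>
      sq_nonneg (∫ s in Set.Ioo (0:ℝ) 1, (Pc cd).eval s * s^j))
    have he := sq_nonneg ((Pc cd).eval 1)
    have hsum0 : (∑ j ∈ Finset.range n,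
        (∫ s in Set.Ioo (0:ℝ) 1, (Pc cd).eval s * s^j)^2) = 0 ∧ ((Pc cd).eval 1)^2 = 0 :=
      ⟨by linarith, by linarith⟩
    have heval1 : (Pc cd).eval 1 = 0 := by
      have := hsum0.2; exact pow_eq_zero_iff (two_ne_zero).elim |>.mp this
    have hmom0 : ∀ j < n, ∫ s in Set.Ioo (0:ℝ) 1, (Pc cd).eval s * s^j = 0 := by
      intro j hj
      have := (Finset.sum_eq_zero_iff_of_nonneg (fun j _ => sq_nonneg _)).mp hsum0.1
        j (Finset.mem_range.mpr hj)
      exact pow_eq_zero_iff (two_ne_zero).elim |>.mp this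
    have hzero : Pc cd = 0 := key_injective n (Pc cd) (hdegPc cd) heval1 hmom0
    have : cd = 0 := by
      funext i
      have := hcoeff cd i
      rw [hzero] at this
      simpa using this.symm
    rw [hS] at hcd
    rw [this] at hcd
    simp at hcd
  have hMnn : 0 ≤ M := hAnn cM
  set C := (M + 1) / δ with hC
  have hCpos : 0 < C := div_pos (by linarith) hδpos
  have hmain : ∀ c, A c ≤ C * Bf c := by
    intro c
    rcases eq_or_ne c 0 with rfl | hc
    · have : A 0 = 0 := by
        rw [hA]; apply Finset.sum_eq_zero; intro i _
        apply Finset.sum_eq_zero; intro j _; simp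
      rw [this]
      exact mul_nonneg hCpos.le (hBnn 0)
    · have hnc : ‖c‖ ≠ 0 := norm_ne_zero_iff.mpr hc
      set u := ‖c‖⁻¹ • c with hu
      have hunorm : u ∈ S := by
        rw [hS, mem_sphere_zero_iff_norm, hu, norm_smul]
        simp [abs_of_nonneg (inv_nonneg.mpr (norm_nonneg c)), inv_mul_cancel₀ hnc]
      have hcu : c = ‖c‖ • u := by
        rw [hu, smul_smul, mul_inv_cancel₀ hnc, one_smul]
      have hAu : A u ≤ M := hMmax hunorm
      have hBu : δ ≤ Bf u := hdmin hunorm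
      have step : A u ≤ C * Bf u := by
        calc A u ≤ M + 1 := by linarith
          _ = C * δ := by rw [hC]; field_simp
          _ ≤ C * Bf u := by
              apply mul_le_mul_of_nonneg_left hBu hCpos.le
      have h1 : A c = ‖c‖^2 * A u := by nth_rewrite 1 [hcu]; exact hAhom _ _
      have h2 : Bf c = ‖c‖^2 * Bf u := by nth_rewrite 1 [hcu]; exact hBhom _ _
      have h3 := mul_le_mul_of_nonneg_left step (sq_nonneg ‖c‖)
      rw [h1, h2]
      calc ‖c‖^2 * A u ≤ ‖c‖^2 * (C * Bf u) := h3
        _ = C * (‖c‖^2 * Bf u) := by ring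
  refine ⟨C, hCpos, ?_⟩
  intro h hdeg h1
  set c : Fin N → ℝ := fun i => h.coeff i with hc
  have hPch : Pc c = h := by
    conv_rhs => rw [Polynomial.as_sum_range' h N (by omega)]
    rw [hPc]
    exact Fin.sum_univ_eq_sum_range (fun i => monomial i (h.coeff i)) N
  have := hmain c
  rw [hAdef, hBdef] at this
  simp only at this
  rw [hPch, h1] at this
  simpa using this

lemma taylor_L1_bound {m : ℕ} (hm : 1 ≤ m) {a b : ℝ} (hab : a < b) {w : ℝ → ℝ}
    (hw : ContDiffOn ℝ m w (Set.Icc a b)) :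
    ∀ x ∈ Set.Icc a b,
      |w x - taylorWithinEval w (m-1) (Set.Icc a b) b x| ≤
        (b-a)^(m-1) * ((Nat.factorial (m-1) : ℝ))⁻¹ *
          ∫ t in Set.Ioo a b, |iteratedDerivWithin m w (Set.Icc a b) t| := by
  intro x hx
  set n := m - 1 with hndef
  have hn : n + 1 = m := by omega
  have hunique := uniqueDiffOn_Icc hab
  have hwn : ContDiffOn ℝ n w (Set.Icc a b) :=
    hw.of_le (by exact_mod_cast (by omega : n ≤ m))
  have hdiff : DifferentiableOn ℝ (iteratedDerivWithin n w (Set.Icc a b)) (Set.Ioo a b) :=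
    (hw.differentiableOn_iteratedDerivWithin (by exact_mod_cast (by omega : n < m))
      hunique).mono Set.Ioo_subset_Icc_self
  set wm := iteratedDerivWithin m w (Set.Icc a b) with hwm
  have hwmc : ContinuousOn wm (Set.Icc a b) :=
    hw.continuousOn_iteratedDerivWithin le_rfl hunique
  set F' : ℝ → ℝ := fun t => ((n.factorial : ℝ))⁻¹ * (x - t)^n * wm t with hF'
  have hderiv : ∀ t ∈ Set.Ioo x b,
      HasDerivAt (fun y => taylorWithinEval w n (Set.Icc a b) y x) (F' t) t := by
    intro t ht
    have ht' : t ∈ Set.Ioo a b := ⟨lt_of_le_of_lt hx.1 ht.1, ht.2⟩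
    have h := taylorWithinEval_hasDerivAt_Ioo x hab ht' hwn hdiff
    rw [hn] at h
    convert h using 1
    all_goals rfl
  have hcont : ContinuousOn (fun y => taylorWithinEval w n (Set.Icc a b) y x) (Set.Icc x b) :=
    (continuousOn_taylorWithinEval hunique hwn).mono (Set.Icc_subset_Icc hx.1 le_rfl)
  have hwmc' : ContinuousOn wm (Set.Icc x b) := hwmc.mono (Set.Icc_subset_Icc hx.1 le_rfl)
  have hF'cont : ContinuousOn F' (Set.Icc x b) := by
    apply ContinuousOn.mul
    · exact (continuous_const.mul ((continuous_const.sub continuous_id).pow n)).continuousOn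
    · exact hwmc'
  have hFint : IntervalIntegrable F' volume x b := by
    apply ContinuousOn.intervalIntegrable
    rwa [Set.uIcc_of_le hx.2]
  have hFTC := intervalIntegral.integral_eq_sub_of_hasDeriv_right_of_le hx.2 hcont
    (fun t ht => (hderiv t ht).hasDerivWithinAt) hFint
  rw [taylorWithinEval_self] at hFTC
  set K := (b-a)^n * ((n.factorial : ℝ))⁻¹ with hK
  have hKnn : 0 ≤ K := by
    apply mul_nonneg
    · exact pow_nonneg (by linarith) n
    · positivity
  have hptbd : ∀ t ∈ Set.Icc x b, |F' t| ≤ K * |wm t| := by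
    intro t ht
    have hta : a ≤ t := le_trans hx.1 ht.1
    have htb : t ≤ b := ht.2
    have hxt : |x - t| ≤ b - a := abs_le.mpr ⟨by linarith [hx.1, hx.2], by linarith [hx.1, hx.2]⟩
    rw [hF']
    simp only
    rw [abs_mul, abs_mul, abs_inv, abs_pow, Nat.abs_cast, hK]
    have h1 : |x - t|^n ≤ (b-a)^n := pow_le_pow_left₀ (abs_nonneg _) hxt n
    have h2 : (0:ℝ) ≤ ((n.factorial : ℝ))⁻¹ := by positivity
    nlinarith [abs_nonneg (wm t), mul_le_mul_of_nonneg_right h1 (abs_nonneg (wm t)), h2]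
  have habsint : IntervalIntegrable (fun t => |wm t|) volume x b := by
    apply ContinuousOn.intervalIntegrable
    rw [Set.uIcc_of_le hx.2]
    exact hwmc'.abs
  have step1 : |w x - taylorWithinEval w n (Set.Icc a b) b x| ≤ ∫ t in x..b, |F' t| := by
    rw [abs_sub_comm, ← hFTC]
    have := intervalIntegral.norm_integral_le_integral_norm (μ := volume) (f := F') hx.2
    simpa [Real.norm_eq_abs] using this
  have step2 : ∫ t in x..b, |F' t| ≤ ∫ t in x..b, K * |wm t| := by
    apply intervalIntegral.integral_mono_on hx.2 _ (habsint.const_mul K) hptbd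
    apply ContinuousOn.intervalIntegrable
    rw [Set.uIcc_of_le hx.2]
    exact hF'cont.abs
  have step3 : ∫ t in x..b, K * |wm t| = K * ∫ t in x..b, |wm t| :=
    intervalIntegral.integral_const_mul _ _
  have habsint' : IntervalIntegrable (fun t => |wm t|) volume a b := by
    apply ContinuousOn.intervalIntegrable
    rw [Set.uIcc_of_le hab.le]
    exact hwmc.abs
  have step4 : ∫ t in x..b, |wm t| ≤ ∫ t in a..b, |wm t| := by
    apply intervalIntegral.integral_mono_interval hx.1 hx.2 le_rfl _ habsint'
    exact Filter.Eventually.of_forall (fun t => abs_nonneg _)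
  have hioo : ∫ t in a..b, |wm t| = ∫ t in Set.Ioo a b, |wm t| := by
    rw [intervalIntegral.integral_of_le hab.le, integral_Ioc_eq_integral_Ioo]
  calc |w x - taylorWithinEval w n (Set.Icc a b) b x|
      ≤ ∫ t in x..b, |F' t| := step1
    _ ≤ ∫ t in x..b, K * |wm t| := step2
    _ = K * ∫ t in x..b, |wm t| := step3
    _ ≤ K * ∫ t in a..b, |wm t| := mul_le_mul_of_nonneg_left step4 hKnn
    _ = (b-a)^(m-1) * ((Nat.factorial (m-1) : ℝ))⁻¹ *
          ∫ t in Set.Ioo a b, |iteratedDerivWithin m w (Set.Icc a b) t| := by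
        rw [hioo, hK, hndef]

set_option maxHeartbeats 2000000 in
/-- Approximation property: for `q ≥ 2` and `1 ≤ m ≤ q` there is `C > 0`, depending only on
`q` and `m`, such that for all `a < b`, every `m`-times continuously differentiable
`w : [a, b] → ℝ`, and every polynomial `g` of degree at most `q − 1` with `g(b) = w(b)` and
`∫_a^b (g − w) r dt = 0` for all polynomials `r` of degree at most `q − 2`, one has
`‖w − g‖_{L²(a,b)} ≤ C (b−a)^m ‖w^{(m)}‖_{L²(a,b)}`. -/
theorem projection_approximation_L2 (q m : ℕ) (hq : 2 ≤ q) (hm1 : 1 ≤ m) (hmq : m ≤ q) :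
    ∃ C : ℝ, 0 < C ∧ ∀ a b : ℝ, a < b → ∀ w : ℝ → ℝ,
      ContDiffOn ℝ m w (Set.Icc a b) →
      ∀ g : Polynomial ℝ, g.natDegree ≤ q - 1 → g.eval b = w b →
        (∀ r : Polynomial ℝ, r.natDegree ≤ q - 2 →
          ∫ t in Set.Ioo a b, (g.eval t - w t) * r.eval t = 0) →
        Real.sqrt (∫ t in Set.Ioo a b, (w t - g.eval t) ^ 2) ≤
          C * (b - a) ^ m *
            Real.sqrt (∫ t in Set.Ioo a b,
              (iteratedDerivWithin m w (Set.Icc a b) t) ^ 2) := by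
  obtain ⟨C₀, hC₀pos, hC₀⟩ := refB (q - 1)
  set nq : ℝ := ((q - 1 : ℕ) : ℝ) with hnq
  have hnqnn : 0 ≤ nq := Nat.cast_nonneg _
  set K₁ : ℝ := 2 * (1 + C₀ * nq) * (((Nat.factorial (m-1) : ℝ))⁻¹)^2 with hK₁
  have hK₁pos : 0 < K₁ := by
    have h1 : 0 < 1 + C₀ * nq := by nlinarith
    have h2 : (0:ℝ) < (((Nat.factorial (m-1) : ℝ))⁻¹)^2 := by positivity
    positivity
  refine ⟨Real.sqrt K₁, Real.sqrt_pos.mpr hK₁pos, ?_⟩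
  intro a b hab w hw g hgdeg hgb horth
  have hba : (0:ℝ) < b - a := by linarith
  have hne : b - a ≠ 0 := ne_of_gt hba
  have hvol : (volume (Set.Ioo a b)).toReal = b - a := by
    rw [Real.volume_Ioo, ENNReal.toReal_ofReal hba.le]
  have hvolfin : volume (Set.Ioo a b) < ⊤ := by
    rw [Real.volume_Ioo]; exact ENNReal.ofReal_lt_top
  have hconst : ∀ c : ℝ, IntegrableOn (fun _ : ℝ => c) (Set.Ioo a b) :=
    fun c => (integrableOn_const_iff (C := c)).mpr (Or.inr hvolfin)
  have huni := uniqueDiffOn_Icc hab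
  have hwc : ContinuousOn w (Set.Icc a b) := hw.continuousOn
  set wm := iteratedDerivWithin m w (Set.Icc a b) with hwmdef
  have hwmc : ContinuousOn wm (Set.Icc a b) :=
    hw.continuousOn_iteratedDerivWithin le_rfl huni
  set L := ∫ t in Set.Ioo a b, |wm t| with hLdef
  have hLnn : 0 ≤ L := setIntegral_nonneg measurableSet_Ioo (fun t _ => abs_nonneg _)
  set I := ∫ t in Set.Ioo a b, (wm t)^2 with hIdef
  have hInn : 0 ≤ I := setIntegral_nonneg measurableSet_Ioo (fun t _ => sq_nonneg _)
  -- Taylor polynomial at b of degree m-1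
  set p : Polynomial ℝ := ∑ i ∈ Finset.range m,
    Polynomial.C (((Nat.factorial i : ℝ))⁻¹ * iteratedDerivWithin i w (Set.Icc a b) b)
      * (Polynomial.X - Polynomial.C b)^i with hpdef
  have hpeval : ∀ x : ℝ, p.eval x = taylorWithinEval w (m-1) (Set.Icc a b) b x := by
    intro x
    rw [taylor_within_apply]
    have hrange : m - 1 + 1 = m := by omega
    rw [hrange, hpdef]
    rw [eval_finset_sum]
    apply Finset.sum_congr rfl
    intro i _
    rw [eval_mul, eval_C, eval_pow, eval_sub, eval_X, eval_C, smul_eq_mul]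
    ring
  have hpdeg : p.natDegree ≤ q - 1 := by
    apply natDegree_sum_le_of_forall_le
    intro i hi
    refine le_trans (natDegree_C_mul_le _ _) ?_
    rw [natDegree_pow, natDegree_X_sub_C, mul_one]
    have := Finset.mem_range.mp hi
    omega
  have hpb : p.eval b = w b := by rw [hpeval b, taylorWithinEval_self]
  set D := (b-a)^(m-1) * ((Nat.factorial (m-1) : ℝ))⁻¹ * L with hDdef
  have hDnn : 0 ≤ D := by
    apply mul_nonneg (mul_nonneg (pow_nonneg hba.le _) (by positivity)) hLnn
  have hR : ∀ x ∈ Set.Icc a b, |w x - p.eval x| ≤ D := by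
    intro x hx
    rw [hpeval]
    exact taylor_L1_bound hm1 hab hw x hx
  set h : Polynomial ℝ := g - p with hhdef
  have hhdeg : h.natDegree ≤ q - 1 := le_trans (natDegree_sub_le _ _) (max_le hgdeg hpdeg)
  have hhb : h.eval b = 0 := by rw [hhdef, eval_sub, hgb, hpb, sub_self]
  -- integrability facts
  have hwint : IntegrableOn w (Set.Ioo a b) := contOn_integrableOn hwc
  have hRcont : ContinuousOn (fun t => w t - p.eval t) (Set.Icc a b) :=
    hwc.sub p.continuous.continuousOn
  -- moments of h against scaled monomials
  set rhat : ℕ → Polynomial ℝ :=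
    fun j => ((Polynomial.X - Polynomial.C a) * Polynomial.C ((b-a)⁻¹))^j with hrhatdef
  have hrhatdeg : ∀ j, j ≤ q - 2 → (rhat j).natDegree ≤ q - 2 := by
    intro j hj
    rw [hrhatdef]
    refine le_trans (natDegree_pow_le) ?_
    have hb1 : ((Polynomial.X - Polynomial.C a) * Polynomial.C ((b-a)⁻¹)).natDegree ≤ 1 := by
      refine le_trans (natDegree_mul_le) ?_
      rw [natDegree_X_sub_C, natDegree_C]
    calc j * ((Polynomial.X - Polynomial.C a) * Polynomial.C ((b-a)⁻¹)).natDegree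
        ≤ j * 1 := Nat.mul_le_mul_left j hb1
      _ = j := Nat.mul_one j
      _ ≤ q - 2 := hj
  have hrhatbd : ∀ j, ∀ t ∈ Set.Icc a b, |(rhat j).eval t| ≤ 1 := by
    intro j t ht
    rw [hrhatdef]
    rw [eval_pow, eval_mul, eval_sub, eval_X, eval_C, eval_C, abs_pow]
    apply pow_le_one₀ (abs_nonneg _)
    rw [abs_mul, abs_inv]
    rw [abs_of_nonneg (by linarith [ht.1] : (0:ℝ) ≤ t - a), abs_of_pos hba]
    rw [← div_eq_mul_inv]
    apply div_le_one_of_le₀ (by linarith [ht.2]) hba.le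
  have hmom : ∀ j, j ≤ q - 2 →
      |∫ t in Set.Ioo a b, h.eval t * (rhat j).eval t| ≤ (b-a) * D := by
    intro j hj
    have hint1 : IntegrableOn (fun t => (g.eval t - w t) * (rhat j).eval t) (Set.Ioo a b) :=
      contOn_integrableOn ((g.continuous.continuousOn.sub hwc).mul
        (rhat j).continuous.continuousOn)
    have hint2 : IntegrableOn (fun t => (w t - p.eval t) * (rhat j).eval t) (Set.Ioo a b) :=
      contOn_integrableOn (hRcont.mul (rhat j).continuous.continuousOn)
    have hsplit : (∫ t in Set.Ioo a b, h.eval t * (rhat j).eval t)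
        = ∫ t in Set.Ioo a b, (w t - p.eval t) * (rhat j).eval t := by
      have hfun : ∀ t : ℝ, h.eval t * (rhat j).eval t
          = (g.eval t - w t) * (rhat j).eval t + (w t - p.eval t) * (rhat j).eval t := by
        intro t; rw [hhdef, eval_sub]; ring
      simp_rw [hfun]
      rw [integral_add hint1 hint2, horth _ (hrhatdeg j hj), zero_add]
    rw [hsplit]
    have hbd : ∀ t ∈ Set.Ioo a b, ‖(w t - p.eval t) * (rhat j).eval t‖ ≤ D := by
      intro t ht
      have ht' : t ∈ Set.Icc a b := Set.Ioo_subset_Icc_self ht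
      rw [Real.norm_eq_abs, abs_mul]
      calc |w t - p.eval t| * |(rhat j).eval t| ≤ D * 1 :=
        mul_le_mul (hR t ht') (hrhatbd j t ht') (abs_nonneg _) hDnn
        _ = D := mul_one D
    have := norm_setIntegral_le_of_norm_le_const (μ := volume) hvolfin hbd
    rw [measureReal_def, hvol] at this
    rw [Real.norm_eq_abs] at this
    calc |∫ t in Set.Ioo a b, (w t - p.eval t) * (rhat j).eval t| ≤ D * (b-a) := this
      _ = (b-a) * D := mul_comm _ _
  -- change of variables and refB
  set aff : Polynomial ℝ := Polynomial.C a + Polynomial.C (b-a) * Polynomial.X with haffdef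
  have haffdeg : aff.natDegree ≤ 1 := by
    rw [haffdef]
    refine le_trans (natDegree_add_le _ _) ?_
    rw [natDegree_C]
    simp only [max_le_iff]
    exact ⟨Nat.zero_le 1, le_trans (natDegree_C_mul_le _ _) (by rw [natDegree_X])⟩
  have haffb : aff.eval 1 = b := by rw [haffdef]; simp
  set hhat : Polynomial ℝ := h.comp aff with hhhatdef
  have hhatdeg : hhat.natDegree ≤ q - 1 := by
    rw [hhhatdef]
    refine le_trans (natDegree_comp_le) ?_
    calc h.natDegree * aff.natDegree ≤ (q-1) * 1 := Nat.mul_le_mul hhdeg haffdeg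
      _ = q - 1 := Nat.mul_one _
  have hhat1 : hhat.eval 1 = 0 := by rw [hhhatdef, eval_comp, haffb, hhb]
  have hrefB := hC₀ hhat hhatdeg hhat1
  -- substitute back
  have hsub2 : ∫ t in Set.Ioo a b, (h.eval t)^2 = (b-a) * ∫ s in Set.Ioo (0:ℝ) 1, (hhat.eval s)^2 := by
    have hh2 := integral_Ioo_poly_comp (h * h) hab
    rw [mul_comp] at hh2
    simp only [eval_mul] at hh2
    simp_rw [← sq] at hh2
    exact hh2
  have hraffcomp : ∀ j, (rhat j).comp aff = Polynomial.X ^ j := by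
    intro j
    rw [hrhatdef, pow_comp]
    congr 1
    rw [mul_comp, sub_comp, X_comp, C_comp, C_comp, haffdef]
    have h1 : Polynomial.C a + Polynomial.C (b-a) * Polynomial.X - Polynomial.C a
        = Polynomial.C (b-a) * Polynomial.X := by ring
    rw [h1, mul_comm, ← mul_assoc, ← Polynomial.C_mul, inv_mul_cancel₀ hne,
      Polynomial.C_1, one_mul]
  have hsubm : ∀ j, (∫ s in Set.Ioo (0:ℝ) 1, hhat.eval s * s^j)
      = (b-a)⁻¹ * ∫ t in Set.Ioo a b, h.eval t * (rhat j).eval t := by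
    intro j
    have hcomp := integral_Ioo_poly_comp (h * rhat j) hab
    rw [mul_comp, hraffcomp j] at hcomp
    simp only [eval_mul, eval_pow, eval_X] at hcomp
    rw [hcomp, ← mul_assoc, inv_mul_cancel₀ hne, one_mul]
  -- bound on ∫ h²
  have hhbound : ∫ t in Set.Ioo a b, (h.eval t)^2 ≤ C₀ * nq * ((b-a) * D^2) := by
    have hsumbd : ∑ j ∈ Finset.range (q-1), (∫ s in Set.Ioo (0:ℝ) 1, hhat.eval s * s^j)^2
        ≤ nq * D^2 := by
      have : ∀ j ∈ Finset.range (q-1),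
          (∫ s in Set.Ioo (0:ℝ) 1, hhat.eval s * s^j)^2 ≤ D^2 := by
        intro j hjmem
        have hj : j ≤ q - 2 := by
          have := Finset.mem_range.mp hjmem; omega
        rw [hsubm j]
        have habs : |(b-a)⁻¹ * ∫ t in Set.Ioo a b, h.eval t * (rhat j).eval t| ≤ D := by
          rw [abs_mul, abs_inv, abs_of_pos hba]
          calc (b-a)⁻¹ * |∫ t in Set.Ioo a b, h.eval t * (rhat j).eval t|
              ≤ (b-a)⁻¹ * ((b-a) * D) := by
                apply mul_le_mul_of_nonneg_left (hmom j hj) (by positivity)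
            _ = D := by field_simp
        calc ((b-a)⁻¹ * ∫ t in Set.Ioo a b, h.eval t * (rhat j).eval t)^2
            = |(b-a)⁻¹ * ∫ t in Set.Ioo a b, h.eval t * (rhat j).eval t|^2 := (sq_abs _).symm
          _ ≤ D^2 := pow_le_pow_left₀ (abs_nonneg _) habs 2
      calc ∑ j ∈ Finset.range (q-1), (∫ s in Set.Ioo (0:ℝ) 1, hhat.eval s * s^j)^2
          ≤ ∑ _j ∈ Finset.range (q-1), D^2 := Finset.sum_le_sum this
        _ = nq * D^2 := by rw [Finset.sum_const, Finset.card_range, nsmul_eq_mul, hnq]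
    calc ∫ t in Set.Ioo a b, (h.eval t)^2
        = (b-a) * ∫ s in Set.Ioo (0:ℝ) 1, (hhat.eval s)^2 := hsub2
      _ ≤ (b-a) * (C₀ * ∑ j ∈ Finset.range (q-1),
            (∫ s in Set.Ioo (0:ℝ) 1, hhat.eval s * s^j)^2) := by
          apply mul_le_mul_of_nonneg_left hrefB hba.le
      _ ≤ (b-a) * (C₀ * (nq * D^2)) := by
          apply mul_le_mul_of_nonneg_left _ hba.le
          exact mul_le_mul_of_nonneg_left hsumbd hC₀pos.le
      _ = C₀ * nq * ((b-a) * D^2) := by ring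
  -- bound on ∫ R²
  have hRint2 : IntegrableOn (fun t => (w t - p.eval t)^2) (Set.Ioo a b) :=
    contOn_integrableOn (hRcont.pow 2)
  have hRbound : ∫ t in Set.Ioo a b, (w t - p.eval t)^2 ≤ (b-a) * D^2 := by
    calc ∫ t in Set.Ioo a b, (w t - p.eval t)^2
        ≤ ∫ _t in Set.Ioo a b, D^2 := by
          apply setIntegral_mono_on hRint2 (hconst _) measurableSet_Ioo
          intro t ht
          have ht' : t ∈ Set.Icc a b := Set.Ioo_subset_Icc_self ht
          calc (w t - p.eval t)^2 = |w t - p.eval t|^2 := (sq_abs _).symm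
            _ ≤ D^2 := pow_le_pow_left₀ (abs_nonneg _) (hR t ht') 2
      _ = (b-a) * D^2 := by rw [setIntegral_const, measureReal_def, hvol, smul_eq_mul, mul_comm]
  -- bound on ∫ e²
  have hhint2 : IntegrableOn (fun t => (h.eval t)^2) (Set.Ioo a b) :=
    contOn_integrableOn ((h.continuous.continuousOn).pow 2)
  have heint : IntegrableOn (fun t => (w t - g.eval t)^2) (Set.Ioo a b) :=
    contOn_integrableOn ((hwc.sub g.continuous.continuousOn).pow 2)
  have hebound : ∫ t in Set.Ioo a b, (w t - g.eval t)^2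
      ≤ 2 * ((b-a) * D^2) + 2 * (C₀ * nq * ((b-a) * D^2)) := by
    have hptw : ∀ t ∈ Set.Ioo a b, (w t - g.eval t)^2
        ≤ 2 * (w t - p.eval t)^2 + 2 * (h.eval t)^2 := by
      intro t _
      have : g.eval t = p.eval t + h.eval t := by rw [hhdef, eval_sub]; ring
      rw [this]
      nlinarith [sq_nonneg (w t - p.eval t + h.eval t)]
    calc ∫ t in Set.Ioo a b, (w t - g.eval t)^2
        ≤ ∫ t in Set.Ioo a b, (2 * (w t - p.eval t)^2 + 2 * (h.eval t)^2) := by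
          apply setIntegral_mono_on heint _ measurableSet_Ioo hptw
          exact (hRint2.const_mul 2).add (hhint2.const_mul 2)
      _ = 2 * (∫ t in Set.Ioo a b, (w t - p.eval t)^2)
            + 2 * (∫ t in Set.Ioo a b, (h.eval t)^2) := by
          rw [integral_add (hRint2.const_mul 2) (hhint2.const_mul 2),
            MeasureTheory.integral_const_mul, MeasureTheory.integral_const_mul]
      _ ≤ 2 * ((b-a) * D^2) + 2 * (C₀ * nq * ((b-a) * D^2)) := by
          have h1 := mul_le_mul_of_nonneg_left hRbound (by norm_num : (0:ℝ) ≤ 2)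
          have h2 := mul_le_mul_of_nonneg_left hhbound (by norm_num : (0:ℝ) ≤ 2)
          linarith
  -- L² bound on L
  have hL2 : L ≤ Real.sqrt (b-a) * Real.sqrt I := by
    rw [hLdef, hIdef]
    exact abs_integral_le_sqrt_mul_sqrt hab (contOn_integrableOn hwmc)
      (contOn_integrableOn (hwmc.pow 2))
  have hLsq : L^2 ≤ (b-a) * I := by
    calc L^2 ≤ (Real.sqrt (b-a) * Real.sqrt I)^2 := pow_le_pow_left₀ hLnn hL2 2
      _ = (b-a) * I := by
        rw [mul_pow, Real.sq_sqrt hba.le, Real.sq_sqrt hInn]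
  -- final combination
  have hfinal : ∫ t in Set.Ioo a b, (w t - g.eval t)^2 ≤ K₁ * (((b-a)^m)^2 * I) := by
    have hDsq : D^2 = ((b-a)^(m-1))^2 * (((Nat.factorial (m-1) : ℝ))⁻¹)^2 * L^2 := by
      rw [hDdef]; ring
    have hexp : (b-a) * (((b-a)^(m-1))^2 * ((b-a))) = ((b-a)^m)^2 := by
      rw [← pow_mul, ← pow_mul]
      rw [show (b-a) * ((b-a)^((m-1)*2) * (b-a)) = (b-a)^((m-1)*2 + 2) by ring]
      congr 1
      omega
    have hbD : (b-a) * D^2 ≤ ((b-a)^m)^2 * (((Nat.factorial (m-1) : ℝ))⁻¹)^2 * I := by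
      rw [hDsq]
      calc (b-a) * (((b-a)^(m-1))^2 * (((Nat.factorial (m-1) : ℝ))⁻¹)^2 * L^2)
          ≤ (b-a) * (((b-a)^(m-1))^2 * (((Nat.factorial (m-1) : ℝ))⁻¹)^2 * ((b-a) * I)) := by
            apply mul_le_mul_of_nonneg_left _ hba.le
            apply mul_le_mul_of_nonneg_left hLsq (by positivity)
        _ = ((b-a) * (((b-a)^(m-1))^2 * (b-a))) * ((((Nat.factorial (m-1) : ℝ))⁻¹)^2 * I) := by
            ring
        _ = ((b-a)^m)^2 * (((Nat.factorial (m-1) : ℝ))⁻¹)^2 * I := by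
            rw [hexp]; ring
    calc ∫ t in Set.Ioo a b, (w t - g.eval t)^2
        ≤ 2 * ((b-a) * D^2) + 2 * (C₀ * nq * ((b-a) * D^2)) := hebound
      _ = 2 * (1 + C₀ * nq) * ((b-a) * D^2) := by ring
      _ ≤ 2 * (1 + C₀ * nq) * (((b-a)^m)^2 * (((Nat.factorial (m-1) : ℝ))⁻¹)^2 * I) := by
          have hcn : (0:ℝ) ≤ 2 * (1 + C₀ * nq) := by nlinarith [hC₀pos, hnqnn]
          exact mul_le_mul_of_nonneg_left hbD hcn
      _ = K₁ * (((b-a)^m)^2 * I) := by rw [hK₁]; ring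
  -- take square roots
  have hgoal := Real.sqrt_le_sqrt hfinal
  calc Real.sqrt (∫ t in Set.Ioo a b, (w t - g.eval t)^2)
      ≤ Real.sqrt (K₁ * (((b-a)^m)^2 * I)) := hgoal
    _ = Real.sqrt K₁ * ((b-a)^m * Real.sqrt I) := by
        rw [Real.sqrt_mul hK₁pos.le, Real.sqrt_mul (sq_nonneg _),
          Real.sqrt_sq (pow_nonneg hba.le m)]
    _ = Real.sqrt K₁ * (b-a)^m * Real.sqrt I := by ring
end

section
/- Let q ≥ 2 be an integer. There exists a constant C > 0, depending only on q, such that for all real numbers a < b, every continuous function w : [a, b] → ℝ, and every real polynomial g of degree at most q − 1 satisfying g(b) = w(b) and ∫_a^b (g(t) − w(t))·r(t) dt = 0 for every real polynomial r of degree at most q − 2, one has sup_{t ∈ [a, b]} |g(t)| ≤ C·sup_{t ∈ [a, b]} |w(t)|. -/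
open MeasureTheory

open Polynomial in

noncomputable def Amat (q : ℕ) : Matrix (Fin q) (Fin q) ℝ :=
  fun k j => if (k : ℕ) < q - 1 then 1 / ((j : ℕ) + (k : ℕ) + 1) else 1

lemma key_int (q : ℕ) (p : Polynomial ℝ) (hp : p.natDegree < q) (k : ℕ) :
    ∫ s in (0:ℝ)..1, p.eval s * s ^ k
      = ∑ j : Fin q, (1 / ((j : ℕ) + (k : ℕ) + 1)) * p.coeff j := by
  have hev : ∀ s : ℝ, p.eval s * s ^ k
      = ∑ j ∈ Finset.range q, p.coeff j * s ^ (j + k) := by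
    intro s
    rw [Polynomial.eval_eq_sum_range' hp, Finset.sum_mul]
    exact Finset.sum_congr rfl fun j _ => by ring
  simp only [hev]
  rw [intervalIntegral.integral_finset_sum]
  · rw [← Fin.sum_univ_eq_sum_range (fun j => ∫ s in (0:ℝ)..1, p.coeff j * s ^ (j + k))]
    refine Finset.sum_congr rfl fun j _ => ?_
    rw [intervalIntegral.integral_const_mul, integral_pow]
    push_cast
    ring
  · intro j _
    exact (continuous_const.mul (continuous_pow _)).intervalIntegrable _ _

lemma key_mulVec (q : ℕ) (p : Polynomial ℝ) (hp : p.natDegree < q) (k : Fin q) :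
    (Amat q).mulVec (fun j => p.coeff j) k
      = if (k : ℕ) < q - 1 then ∫ s in (0:ℝ)..1, p.eval s * s ^ (k : ℕ)
        else p.eval 1 := by
  by_cases hk : (k : ℕ) < q - 1
  · rw [if_pos hk, key_int q p hp]
    simp only [Matrix.mulVec, dotProduct, Amat, if_pos hk]
  · rw [if_neg hk, Polynomial.eval_eq_sum_range' hp,
      ← Fin.sum_univ_eq_sum_range (fun j => p.coeff j * (1:ℝ) ^ j)]
    simp only [Matrix.mulVec, dotProduct, Amat, if_neg hk, one_pow, mul_one, one_mul]

lemma Amat_ker (q : ℕ) (hq : 2 ≤ q) (x : Fin q → ℝ)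
    (hx : (Amat q).mulVec x = 0) : x = 0 := by
  classical
  set p : Polynomial ℝ := ∑ j : Fin q, Polynomial.C (x j) * Polynomial.X ^ (j : ℕ) with hpdef
  have hcoeff : ∀ j : Fin q, p.coeff j = x j := by
    intro j
    rw [hpdef, Polynomial.finset_sum_coeff]
    simp only [Polynomial.coeff_C_mul, Polynomial.coeff_X_pow]
    rw [Finset.sum_eq_single j]
    · simp
    · intro i _ hij
      have : (j : ℕ) ≠ (i : ℕ) := fun h => hij (Fin.ext h.symm)
      simp [this]
    · simp
  have hdegle : p.natDegree ≤ q - 1 := by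
    apply Polynomial.natDegree_sum_le_of_forall_le
    intro j _
    calc (Polynomial.C (x j) * Polynomial.X ^ (j : ℕ)).natDegree
        ≤ (Polynomial.X ^ (j : ℕ) : Polynomial ℝ).natDegree :=
          Polynomial.natDegree_C_mul_le _ _
      _ = (j : ℕ) := Polynomial.natDegree_X_pow _
      _ ≤ q - 1 := Nat.le_sub_one_of_lt j.isLt
  have hdegle' : p.natDegree ≤ q - 1 := hdegle
  have hdeg : p.natDegree < q := lt_of_le_of_lt hdegle (by omega)
  have hmv : (Amat q).mulVec (fun j => p.coeff j) = 0 := by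
    have : (fun j : Fin q => p.coeff j) = x := funext hcoeff
    rw [this, hx]
  have hint : ∀ k : ℕ, k < q - 1 → ∫ s in (0:ℝ)..1, p.eval s * s ^ k = 0 := by
    intro k hk
    have hk' : k < q := by omega
    have := congrFun hmv ⟨k, hk'⟩
    rwa [key_mulVec q p hdeg ⟨k, hk'⟩, if_pos hk] at this
  have hev1 : p.eval 1 = 0 := by
    have hq1 : q - 1 < q := by omega
    have := congrFun hmv ⟨q - 1, hq1⟩
    rwa [key_mulVec q p hdeg ⟨q - 1, hq1⟩, if_neg (lt_irrefl _)] at this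
  have hp0 : p = 0 := by
    by_contra hne
    obtain ⟨h, hh⟩ := Polynomial.dvd_iff_isRoot.mpr hev1
    have hhne : h ≠ 0 := fun h0 => hne (by rw [hh, h0, mul_zero])
    have hdegh : h.natDegree < q - 1 := by
      have hXC : (Polynomial.X - Polynomial.C (1:ℝ)) ≠ 0 := Polynomial.X_sub_C_ne_zero 1
      have := Polynomial.natDegree_mul hXC hhne
      rw [← hh, Polynomial.natDegree_X_sub_C] at this
      omega
    -- ∫ p * h = 0
    have hph : ∫ s in (0:ℝ)..1, p.eval s * h.eval s = 0 := by
      have hev : ∀ s : ℝ, p.eval s * h.eval s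
          = ∑ k ∈ Finset.range (q-1), h.coeff k * (p.eval s * s ^ k) := by
        intro s
        rw [Polynomial.eval_eq_sum_range' hdegh, Finset.mul_sum]
        exact Finset.sum_congr rfl fun k _ => by ring
      simp only [hev]
      rw [intervalIntegral.integral_finset_sum]
      · exact Finset.sum_eq_zero fun k hk => by
          rw [intervalIntegral.integral_const_mul, hint k (Finset.mem_range.mp hk), mul_zero]
      · intro k _
        exact (continuous_const.mul ((p.continuous).mul (continuous_pow _))).intervalIntegrable _ _
    -- f := (1-s) h(s)^2 is nonneg on [0,1], continuous, integral zero
    set f : ℝ → ℝ := fun s => (1 - s) * (h.eval s) ^ 2 with hfdef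
    have hfint : ∫ s in Set.Ioc (0:ℝ) 1, f s = 0 := by
      have : ∫ s in (0:ℝ)..1, f s = 0 := by
        have : ∀ s : ℝ, f s = -(p.eval s * h.eval s) := by
          intro s; rw [hfdef, hh]; simp [Polynomial.eval_mul]; ring
        simp only [this]
        rw [intervalIntegral.integral_neg, hph, neg_zero]
      rwa [intervalIntegral.integral_of_le (by norm_num : (0:ℝ) ≤ 1)] at this
    have hfcont : Continuous f := by
      exact (continuous_const.sub continuous_id).mul ((h.continuous).pow 2)
    have hfae : f =ᵐ[volume.restrict (Set.Ioc (0:ℝ) 1)] 0 := by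
      rw [← MeasureTheory.integral_eq_zero_iff_of_nonneg_ae]
      · exact hfint
      · refine MeasureTheory.ae_restrict_of_forall_mem measurableSet_Ioc ?_
        intro s hs
        have : 0 ≤ 1 - s := by linarith [hs.2]
        positivity
      · exact hfcont.integrableOn_Ioc
    -- derive contradiction
    have hProots : {s : ℝ | f s = 0}.Finite := by
      have hP : ((1 - Polynomial.X) * h ^ 2 : Polynomial ℝ) ≠ 0 := by
        apply mul_ne_zero
        · intro h0
          have := congrArg (Polynomial.coeff · 1) h0
          norm_num [Polynomial.coeff_one] at this
        · exact pow_ne_zero 2 hhne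
      have : {s : ℝ | f s = 0} ⊆ {s : ℝ | ((1 - Polynomial.X) * h ^ 2 : Polynomial ℝ).IsRoot s} := by
        intro s hs
        simp only [Set.mem_setOf_eq, Polynomial.IsRoot, Polynomial.eval_mul, Polynomial.eval_sub,
          Polynomial.eval_one, Polynomial.eval_X, Polynomial.eval_pow]
        exact hs
      exact Set.Finite.subset (Polynomial.finite_setOf_isRoot hP) this
    have hzero : volume.restrict (Set.Ioc (0:ℝ) 1) {s : ℝ | f s ≠ 0} = 0 := by
      have := hfae
      rw [Filter.eventuallyEq_iff_exists_mem] at this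
      exact MeasureTheory.ae_iff.mp hfae
    have h1 : (volume.restrict (Set.Ioc (0:ℝ) 1)) Set.univ = 1 := by
      simp [Real.volume_Ioc]
    have h2 : (volume.restrict (Set.Ioc (0:ℝ) 1)) {s : ℝ | f s = 0} = 0 := by
      apply le_antisymm _ (zero_le)
      calc (volume.restrict (Set.Ioc (0:ℝ) 1)) {s : ℝ | f s = 0}
          ≤ volume {s : ℝ | f s = 0} := MeasureTheory.Measure.restrict_le_self _
        _ = 0 := hProots.measure_zero _
    have : (1 : ENNReal) ≤ 0 := by
      calc (1 : ENNReal) = (volume.restrict (Set.Ioc (0:ℝ) 1)) Set.univ := h1.symm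
        _ ≤ (volume.restrict (Set.Ioc (0:ℝ) 1)) ({s : ℝ | f s = 0} ∪ {s : ℝ | f s ≠ 0}) := by
            apply MeasureTheory.measure_mono
            intro s _
            by_cases hs : f s = 0
            · exact Or.inl hs
            · exact Or.inr hs
        _ ≤ _ := MeasureTheory.measure_union_le _ _
        _ = 0 := by rw [h2, hzero, add_zero]
    exact absurd this (by norm_num)
  funext j
  rw [← hcoeff j, hp0]
  simp


/-- Stability: for `q ≥ 2` there is `C > 0`, depending only on `q`, such that for all
`a < b`, every continuous `w : [a, b] → ℝ`, and every polynomial `g` of degree at most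
`q − 1` with `g(b) = w(b)` and `∫_a^b (g − w) r dt = 0` for all polynomials `r` of degree at
most `q − 2`, one has `sup_{[a,b]} |g| ≤ C sup_{[a,b]} |w|`. -/
theorem projection_stability_sup (q : ℕ) (hq : 2 ≤ q) :
    ∃ C : ℝ, 0 < C ∧ ∀ a b : ℝ, a < b → ∀ w : ℝ → ℝ,
      ContinuousOn w (Set.Icc a b) →
      ∀ g : Polynomial ℝ, g.natDegree ≤ q - 1 → g.eval b = w b →
        (∀ r : Polynomial ℝ, r.natDegree ≤ q - 2 →
          ∫ t in Set.Ioo a b, (g.eval t - w t) * r.eval t = 0) →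
        ∀ t ∈ Set.Icc a b, |g.eval t| ≤
          C * sSup ((fun s => |w s|) '' Set.Icc a b) := by
  classical
  have hinj : Function.Injective ((Amat q).mulVecLin) := by
    rw [← LinearMap.ker_eq_bot, LinearMap.ker_eq_bot']
    intro x hx
    exact Amat_ker q hq x (by simpa using hx)
  have hsurj := (LinearMap.injective_iff_surjective).mp hinj
  set e := LinearEquiv.ofBijective ((Amat q).mulVecLin) ⟨hinj, hsurj⟩ with he
  set Tinv := LinearMap.toContinuousLinearMap (e.symm.toLinearMap) with hTinv
  refine ⟨(q : ℝ) * (‖Tinv‖ + 1), by positivity, ?_⟩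
  intro a b hab w hw g hgdeg hgb hortho t ht
  set c := b - a with hcdef
  have hc : 0 < c := sub_pos.mpr hab
  set gg := g.comp (Polynomial.C c * Polynomial.X + Polynomial.C a) with hgg
  have hggeval : ∀ s : ℝ, gg.eval s = g.eval (c * s + a) := by
    intro s; rw [hgg, Polynomial.eval_comp]; simp
  have hggdeg : gg.natDegree < q := by
    calc gg.natDegree ≤ g.natDegree * (Polynomial.C c * Polynomial.X + Polynomial.C a).natDegree :=
          Polynomial.natDegree_comp_le
      _ ≤ (q - 1) * 1 := Nat.mul_le_mul hgdeg (Polynomial.natDegree_linear_le)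
      _ < q := by omega
  set x : Fin q → ℝ := fun j => gg.coeff j with hx
  set M := sSup ((fun s => |w s|) '' Set.Icc a b) with hM
  have hbdd : BddAbove ((fun s => |w s|) '' Set.Icc a b) :=
    IsCompact.bddAbove_image isCompact_Icc hw.abs
  have hMb : ∀ s ∈ Set.Icc a b, |w s| ≤ M :=
    fun s hs => le_csSup hbdd ⟨s, hs, rfl⟩
  have hM0 : 0 ≤ M := le_trans (abs_nonneg _) (hMb b ⟨le_of_lt hab, le_refl b⟩)
  have hmaps : ∀ s ∈ Set.Icc (0:ℝ) 1, c * s + a ∈ Set.Icc a b := by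
    intro s hs
    constructor
    · nlinarith [hs.1, hs.2]
    · nlinarith [hs.1, hs.2]
  -- bound on components of the mulVec
  have hTx : ∀ k : Fin q, |(Amat q).mulVec x k| ≤ M := by
    intro k
    rw [hx, key_mulVec q gg hggdeg k]
    by_cases hk : (k : ℕ) < q - 1
    · rw [if_pos hk]
      -- orthogonality applied to r = (c⁻¹ (X - a))^k
      set r : Polynomial ℝ := (Polynomial.C c⁻¹ * (Polynomial.X - Polynomial.C a)) ^ (k : ℕ) with hr
      have hrdeg : r.natDegree ≤ q - 2 := by
        calc r.natDegree ≤ (k : ℕ) * (Polynomial.C c⁻¹ * (Polynomial.X - Polynomial.C a)).natDegree :=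
              Polynomial.natDegree_pow_le
          _ ≤ (k : ℕ) * 1 := Nat.mul_le_mul_left _
              (le_trans (Polynomial.natDegree_C_mul_le _ _) (le_of_eq (Polynomial.natDegree_X_sub_C a)))
          _ ≤ q - 2 := by omega
      have h0 := hortho r hrdeg
      have h0' : ∫ s in (0:ℝ)..1, (gg.eval s - w (c * s + a)) * s ^ (k : ℕ) = 0 := by
        have hF : ∀ s : ℝ, (fun t => (g.eval t - w t) * r.eval t) (c * s + a)
            = (gg.eval s - w (c * s + a)) * s ^ (k : ℕ) := by
          intro s
          simp only [hr, Polynomial.eval_pow, Polynomial.eval_mul, Polynomial.eval_C,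
            Polynomial.eval_sub, Polynomial.eval_X, hggeval]
          have : c⁻¹ * (c * s + a - a) = s := by field_simp; ring
          rw [this]
        have hsub := intervalIntegral.integral_comp_mul_add (a := (0:ℝ)) (b := (1:ℝ))
          (fun t => (g.eval t - w t) * r.eval t) (ne_of_gt hc) a
        rw [show c * (0:ℝ) + a = a by ring, show c * (1:ℝ) + a = b by rw [hcdef]; ring] at hsub
        have hIoo : ∫ t in a..b, (g.eval t - w t) * r.eval t = 0 := by
          rw [intervalIntegral.integral_of_le (le_of_lt hab), integral_Ioc_eq_integral_Ioo]
          exact h0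
        calc ∫ s in (0:ℝ)..1, (gg.eval s - w (c * s + a)) * s ^ (k : ℕ)
            = ∫ s in (0:ℝ)..1, (fun t => (g.eval t - w t) * r.eval t) (c * s + a) := by
              refine intervalIntegral.integral_congr fun s _ => (hF s).symm
          _ = c⁻¹ • ∫ t in a..b, (g.eval t - w t) * r.eval t := hsub
          _ = 0 := by rw [hIoo, smul_zero]
      -- split the integral
      have hwcont : ContinuousOn (fun s : ℝ => w (c * s + a)) (Set.Icc 0 1) := by
        apply hw.comp ((continuous_const.mul continuous_id).add continuous_const).continuousOn
        intro s hs; exact hmaps s hs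
      have hint1 : IntervalIntegrable (fun s : ℝ => gg.eval s * s ^ (k : ℕ)) volume 0 1 :=
        ((gg.continuous).mul (continuous_pow _)).intervalIntegrable _ _
      have hint2 : IntervalIntegrable (fun s : ℝ => w (c * s + a) * s ^ (k : ℕ)) volume 0 1 := by
        apply ContinuousOn.intervalIntegrable
        rw [Set.uIcc_of_le (by norm_num : (0:ℝ) ≤ 1)]
        exact hwcont.mul (continuous_pow _).continuousOn
      have heq : ∫ s in (0:ℝ)..1, gg.eval s * s ^ (k : ℕ)
          = ∫ s in (0:ℝ)..1, w (c * s + a) * s ^ (k : ℕ) := by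
        have := intervalIntegral.integral_sub hint1 hint2
        have h2 : ∫ s in (0:ℝ)..1, (gg.eval s * s ^ (k:ℕ) - w (c * s + a) * s ^ (k:ℕ)) = 0 := by
          have hcg : ∫ s in (0:ℝ)..1, (gg.eval s * s ^ (k:ℕ) - w (c * s + a) * s ^ (k:ℕ))
              = ∫ s in (0:ℝ)..1, (gg.eval s - w (c * s + a)) * s ^ (k:ℕ) :=
            intervalIntegral.integral_congr fun s _ => by ring
          rw [hcg]; exact h0'
        rw [h2] at this
        linarith [this]
      rw [heq]
      have : ‖∫ s in (0:ℝ)..1, w (c * s + a) * s ^ (k : ℕ)‖ ≤ M * |1 - 0| := by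
        apply intervalIntegral.norm_integral_le_of_norm_le_const
        intro s hs
        rw [Set.uIoc_of_le (by norm_num : (0:ℝ) ≤ 1)] at hs
        have hs' : s ∈ Set.Icc (0:ℝ) 1 := ⟨le_of_lt hs.1, hs.2⟩
        rw [Real.norm_eq_abs, abs_mul]
        calc |w (c * s + a)| * |s ^ (k:ℕ)| ≤ M * 1 := by
              apply mul_le_mul (hMb _ (hmaps s hs'))
              · rw [abs_pow]
                exact pow_le_one₀ (abs_nonneg s) (by rw [abs_of_nonneg hs'.1]; exact hs'.2)
              · exact abs_nonneg _
              · exact hM0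
          _ = M := mul_one M
      simpa using this
    · rw [if_neg hk]
      have : gg.eval 1 = g.eval b := by rw [hggeval]; congr 1; rw [hcdef]; ring
      rw [this, hgb]
      exact hMb b ⟨le_of_lt hab, le_refl b⟩
  -- norm bound on x
  have hxnorm : ‖x‖ ≤ ‖Tinv‖ * M := by
    have h1 : x = Tinv ((Amat q).mulVecLin x) := by
      rw [hTinv, LinearMap.coe_toContinuousLinearMap']
      exact (e.symm_apply_apply x).symm
    calc ‖x‖ = ‖Tinv ((Amat q).mulVecLin x)‖ := by rw [← h1]
      _ ≤ ‖Tinv‖ * ‖(Amat q).mulVecLin x‖ := Tinv.le_opNorm _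
      _ ≤ ‖Tinv‖ * M := by
          apply mul_le_mul_of_nonneg_left _ (norm_nonneg _)
          rw [Matrix.mulVecLin_apply]
          exact (pi_norm_le_iff_of_nonneg hM0).mpr fun k => by
            rw [Real.norm_eq_abs]; exact hTx k
  -- final estimate
  set s : ℝ := (t - a) / c with hs
  have hs01 : s ∈ Set.Icc (0:ℝ) 1 := by
    constructor
    · apply div_nonneg (by linarith [ht.1]) (le_of_lt hc)
    · rw [div_le_one hc]; linarith [ht.2]
  have hts : t = c * s + a := by rw [hs, mul_div_assoc', mul_div_cancel_left₀ _ (ne_of_gt hc)]; ring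
  have hgval : g.eval t = gg.eval s := by rw [hggeval, ← hts]
  rw [hgval, Polynomial.eval_eq_sum_range' hggdeg,
    ← Fin.sum_univ_eq_sum_range (fun j => gg.coeff j * s ^ j)]
  calc |∑ j : Fin q, gg.coeff j * s ^ (j : ℕ)|
      ≤ ∑ j : Fin q, |gg.coeff j * s ^ (j : ℕ)| := Finset.abs_sum_le_sum_abs _ _
    _ ≤ ∑ j : Fin q, ‖x‖ := by
        apply Finset.sum_le_sum
        intro j _
        rw [abs_mul]
        calc |gg.coeff j| * |s ^ (j:ℕ)| ≤ |gg.coeff j| * 1 := by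
              apply mul_le_mul_of_nonneg_left _ (abs_nonneg _)
              rw [abs_pow]
              exact pow_le_one₀ (abs_nonneg s) (by rw [abs_of_nonneg hs01.1]; exact hs01.2)
          _ = |x j| := by rw [mul_one]
          _ ≤ ‖x‖ := by rw [← Real.norm_eq_abs]; exact norm_le_pi_norm x j
    _ = (q : ℝ) * ‖x‖ := by rw [Finset.sum_const, Finset.card_univ, Fintype.card_fin, nsmul_eq_mul]
    _ ≤ (q : ℝ) * (‖Tinv‖ * M) := by
        apply mul_le_mul_of_nonneg_left hxnorm (by positivity)
    _ ≤ (q : ℝ) * (‖Tinv‖ + 1) * M := by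
        have hq0 : (0:ℝ) ≤ q := by positivity
        nlinarith [norm_nonneg Tinv]
end

section
/- Let r ≥ 0 be an integer and s ∈ [1, ∞]. There exists a constant C > 0, depending only on r and s, such that for all real numbers a < b, every continuous function ψ : [a, b] → ℝ, and every real polynomial g of degree at most r satisfying ∫_a^b (ψ(t) − g(t))·t^j dt = 0 for every integer j with 0 ≤ j ≤ r, one has ‖g‖_{L^s(a,b)} ≤ C·‖ψ‖_{L^s(a,b)}. -/
open MeasureTheory Finset
open scoped ENNReal

section Aux

lemma integrableOn_cont' {f : ℝ → ℝ} (hf : Continuous f) (a b : ℝ) :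
    IntegrableOn f (Set.Ioo a b) := by
  exact (hf.integrableOn_Icc).mono_set Set.Ioo_subset_Icc_self

lemma integral_pow_Ioo' (n : ℕ) : ∫ t in Set.Ioo (0:ℝ) 1, t ^ n = ((n : ℝ) + 1)⁻¹ := by
  rw [← integral_Ioc_eq_integral_Ioo, ← intervalIntegral.integral_of_le (by norm_num : (0:ℝ) ≤ 1),
    integral_pow]
  norm_num

noncomputable def auxP (r : ℕ) (c : Fin (r+1) → ℝ) : ℝ → ℝ :=
  fun t => ∑ i : Fin (r+1), c i * t ^ (i : ℕ)

lemma auxP_cont {r : ℕ} (c : Fin (r+1) → ℝ) : Continuous (auxP r c) := by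
  unfold auxP; fun_prop

noncomputable def auxQ (r : ℕ) (c : Fin (r+1) → ℝ) : ℝ :=
  ∫ t in Set.Ioo (0:ℝ) 1, (auxP r c t) ^ 2

lemma auxQ_eq {r : ℕ} (c : Fin (r+1) → ℝ) :
    auxQ r c = ∑ i : Fin (r+1), ∑ j : Fin (r+1), c i * c j * ((i : ℝ) + j + 1)⁻¹ := by
  unfold auxQ
  have h1 : ∀ t : ℝ, (auxP r c t) ^ 2 = ∑ i : Fin (r+1), ∑ j : Fin (r+1),
      c i * c j * t ^ ((i : ℕ) + (j : ℕ)) := by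
    intro t
    rw [sq]
    unfold auxP
    rw [Finset.sum_mul_sum]
    congr 1; ext i; congr 1; ext j; ring
  simp_rw [h1]
  rw [integral_finset_sum]
  · congr 1; ext i
    rw [integral_finset_sum]
    · congr 1; ext j
      rw [integral_const_mul, integral_pow_Ioo']
      push_cast; ring_nf
    · intro j _; exact (integrableOn_cont' (by fun_prop) 0 1).const_mul _
  · intro i _
    apply integrable_finset_sum
    intro j _; exact (integrableOn_cont' (by fun_prop) 0 1).const_mul _

lemma auxQ_cont {r : ℕ} : Continuous (auxQ r) := by
  have : auxQ r = fun c => ∑ i : Fin (r+1), ∑ j : Fin (r+1),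
      c i * c j * ((i : ℝ) + j + 1)⁻¹ := funext fun c => auxQ_eq c
  rw [this]; fun_prop

lemma auxQ_pos {r : ℕ} {c : Fin (r+1) → ℝ} (hc : c ≠ 0) : 0 < auxQ r c := by
  unfold auxQ
  have hint : IntegrableOn (fun t => (auxP r c t) ^ 2) (Set.Ioo (0:ℝ) 1) :=
    integrableOn_cont' (by exact (auxP_cont c).pow 2) 0 1
  rw [setIntegral_pos_iff_support_of_nonneg_ae]
  · set p : Polynomial ℝ := ∑ i : Fin (r+1), Polynomial.C (c i) * Polynomial.X ^ (i : ℕ) with hp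
    have hpe : ∀ t, p.eval t = auxP r c t := by
      intro t; rw [hp]; simp [auxP, Polynomial.eval_finset_sum]
    have hpne : p ≠ 0 := by
      intro h
      apply hc
      ext i
      have := congrArg (fun q => Polynomial.coeff q (i : ℕ)) h
      simpa [hp, Polynomial.coeff_X_pow, Polynomial.finset_sum_coeff,
        Fin.val_eq_val] using this
    have hroots : {x : ℝ | p.IsRoot x}.Finite := Polynomial.finite_setOf_isRoot hpne
    have hsub : Set.Ioo (0:ℝ) 1 \ {x : ℝ | p.IsRoot x} ⊆
        Function.support (fun t => (auxP r c t) ^ 2) ∩ Set.Ioo 0 1 := by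
      rintro x ⟨hx1, hx2⟩
      refine ⟨?_, hx1⟩
      simp only [Function.mem_support]
      intro h
      apply hx2
      have : auxP r c x = 0 := by
        nlinarith [sq_nonneg (auxP r c x)]
      simpa [Polynomial.IsRoot, hpe] using this
    have : (0:ℝ≥0∞) < volume (Set.Ioo (0:ℝ) 1 \ {x : ℝ | p.IsRoot x}) := by
      rw [measure_diff_null (hroots.measure_zero _)]
      simp
    exact lt_of_lt_of_le this (measure_mono hsub)
  · filter_upwards with t using sq_nonneg _
  · exact hint

lemma auxP_smul {r : ℕ} (l : ℝ) (c : Fin (r+1) → ℝ) (t : ℝ) :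
    auxP r (l • c) t = l * auxP r c t := by
  simp [auxP, Finset.mul_sum]; congr 1; ext i; ring

lemma auxQ_smul {r : ℕ} (l : ℝ) (c : Fin (r+1) → ℝ) : auxQ r (l • c) = l ^ 2 * auxQ r c := by
  unfold auxQ
  simp_rw [auxP_smul, mul_pow, integral_const_mul]

lemma auxQ_lower (r : ℕ) : ∃ m : ℝ, 0 < m ∧ ∀ c : Fin (r+1) → ℝ, m * ‖c‖ ^ 2 ≤ auxQ r c := by
  obtain ⟨c₀, hc₀, hmin⟩ := (isCompact_sphere (0 : Fin (r+1) → ℝ) 1).exists_isMinOn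
    (NormedSpace.sphere_nonempty.2 zero_le_one) (auxQ_cont (r := r)).continuousOn
  have hc₀ne : c₀ ≠ 0 := by
    intro h; rw [h] at hc₀; simp at hc₀
  refine ⟨auxQ r c₀, auxQ_pos hc₀ne, fun c => ?_⟩
  rcases eq_or_ne c 0 with rfl | hc
  · simp [auxQ, auxP]
  · have hn : (0:ℝ) < ‖c‖ := norm_pos_iff.2 hc
    have hmem : ‖c‖⁻¹ • c ∈ Metric.sphere (0 : Fin (r+1) → ℝ) 1 := by
      simp [norm_smul, abs_of_pos (inv_pos.2 hn), inv_mul_cancel₀ hn.ne']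
    have hQs : auxQ r c₀ ≤ auxQ r (‖c‖⁻¹ • c) := hmin hmem
    rw [auxQ_smul] at hQs
    have h2 : auxQ r c₀ * ‖c‖ ^ 2 ≤ auxQ r c := by
      calc auxQ r c₀ * ‖c‖ ^ 2 ≤ (‖c‖⁻¹ ^ 2 * auxQ r c) * ‖c‖ ^ 2 := by nlinarith
        _ = auxQ r c := by field_simp
    linarith

lemma auxP_bound {r : ℕ} (c : Fin (r+1) → ℝ) {t : ℝ} (ht : t ∈ Set.Icc (0:ℝ) 1) :
    |auxP r c t| ≤ (r+1) * ‖c‖ := by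
  unfold auxP
  calc |∑ i : Fin (r+1), c i * t ^ (i:ℕ)| ≤ ∑ i : Fin (r+1), |c i * t ^ (i:ℕ)| :=
        Finset.abs_sum_le_sum_abs _ _
    _ ≤ ∑ _i : Fin (r+1), ‖c‖ := by
        apply Finset.sum_le_sum
        intro i _
        rw [abs_mul]
        have h1 : |c i| ≤ ‖c‖ := by
          simpa using norm_le_pi_norm c i
        have h2 : |t ^ (i:ℕ)| ≤ 1 := by
          rw [abs_pow]
          exact pow_le_one₀ (abs_nonneg t) (abs_le.mpr ⟨by linarith [ht.1], ht.2⟩)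
        calc |c i| * |t ^ (i:ℕ)| ≤ ‖c‖ * 1 :=
            mul_le_mul h1 h2 (abs_nonneg _) (norm_nonneg c)
          _ = ‖c‖ := mul_one _
    _ = (r+1) * ‖c‖ := by simp [Finset.sum_const, mul_comm]

lemma eval_eq_auxP {r : ℕ} (g : Polynomial ℝ) (hg : g.natDegree ≤ r) (t : ℝ) :
    g.eval t = auxP r (fun i => g.coeff i) t := by
  rw [Polynomial.eval_eq_sum_range' (Nat.lt_succ_of_le hg), auxP]
  rw [Fin.sum_univ_eq_sum_range (fun i => g.coeff i * t ^ i)]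

/-- Core stability estimate on the unit interval. -/
lemma core_estimate (r : ℕ) : ∃ K : ℝ, 0 < K ∧ ∀ ψ : ℝ → ℝ, ContinuousOn ψ (Set.Icc 0 1) →
    ∀ g : Polynomial ℝ, g.natDegree ≤ r →
    (∀ p : Polynomial ℝ, p.natDegree ≤ r →
      ∫ t in Set.Ioo (0:ℝ) 1, (ψ t - g.eval t) * p.eval t = 0) →
    ∀ t ∈ Set.Icc (0:ℝ) 1, |g.eval t| ≤ K * ∫ t in Set.Ioo (0:ℝ) 1, |ψ t| := by
  obtain ⟨m, hm, hQ⟩ := auxQ_lower r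
  refine ⟨(r+1)^2 / m, by positivity, fun ψ hψ g hg horth t ht => ?_⟩
  set c : Fin (r+1) → ℝ := fun i => g.coeff i with hc
  set I : ℝ := ∫ t in Set.Ioo (0:ℝ) 1, |ψ t| with hI
  have hInn : 0 ≤ I := setIntegral_nonneg measurableSet_Ioo (fun x _ => abs_nonneg _)
  have hψint : IntegrableOn ψ (Set.Ioo (0:ℝ) 1) :=
    (hψ.integrableOn_Icc).mono_set Set.Ioo_subset_Icc_self
  have hgc : Continuous (fun t => g.eval t) := g.continuous_aeval
  have hψgint : IntegrableOn (fun t => ψ t * g.eval t) (Set.Ioo (0:ℝ) 1) := by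
    apply ((hψ.mul hgc.continuousOn).integrableOn_Icc).mono_set Set.Ioo_subset_Icc_self
  have hg2int : IntegrableOn (fun t => g.eval t * g.eval t) (Set.Ioo (0:ℝ) 1) :=
    integrableOn_cont' (by fun_prop) 0 1
  have hkey : ∫ t in Set.Ioo (0:ℝ) 1, g.eval t * g.eval t
      = ∫ t in Set.Ioo (0:ℝ) 1, ψ t * g.eval t := by
    have h0 := horth g hg
    have : ∫ t in Set.Ioo (0:ℝ) 1, (ψ t - g.eval t) * g.eval t
        = (∫ t in Set.Ioo (0:ℝ) 1, ψ t * g.eval t)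
          - ∫ t in Set.Ioo (0:ℝ) 1, g.eval t * g.eval t := by
      rw [← integral_sub hψgint hg2int]
      congr 1; ext t; ring
    rw [this] at h0; linarith
  have hQc : auxQ r c = ∫ t in Set.Ioo (0:ℝ) 1, g.eval t * g.eval t := by
    unfold auxQ
    apply setIntegral_congr_fun measurableSet_Ioo
    intro x hx
    show auxP r c x ^ 2 = Polynomial.eval x g * Polynomial.eval x g
    rw [eval_eq_auxP g hg, sq]
  have hb : ∫ t in Set.Ioo (0:ℝ) 1, ψ t * g.eval t ≤ (r+1) * ‖c‖ * I := by
    calc ∫ t in Set.Ioo (0:ℝ) 1, ψ t * g.eval t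
        ≤ ∫ t in Set.Ioo (0:ℝ) 1, |ψ t| * ((r+1) * ‖c‖) := by
          apply setIntegral_mono_on hψgint (hψint.abs.mul_const _) measurableSet_Ioo
          intro x hx
          calc ψ x * g.eval x ≤ |ψ x * g.eval x| := le_abs_self _
            _ = |ψ x| * |g.eval x| := abs_mul _ _
            _ ≤ |ψ x| * ((r+1) * ‖c‖) := by
                apply mul_le_mul_of_nonneg_left _ (abs_nonneg _)
                rw [eval_eq_auxP g hg]
                exact auxP_bound c (Set.mem_Icc_of_Ioo hx)
      _ = (r+1) * ‖c‖ * I := by rw [integral_mul_const, ← hI]; ring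
  have hnc : ‖c‖ ≤ (r+1) / m * I := by
    have h1 : m * ‖c‖^2 ≤ (r+1) * ‖c‖ * I := by
      calc m * ‖c‖^2 ≤ auxQ r c := hQ c
        _ = _ := hQc
        _ = _ := hkey
        _ ≤ _ := hb
    rcases eq_or_lt_of_le (norm_nonneg c) with h | h
    · rw [← h]; positivity
    · rw [div_mul_eq_mul_div, le_div_iff₀ hm]
      nlinarith
  calc |g.eval t| ≤ (r+1) * ‖c‖ := by rw [eval_eq_auxP g hg]; exact auxP_bound c ht
    _ ≤ (r+1) * ((r+1)/m * I) := by
        apply mul_le_mul_of_nonneg_left hnc (by positivity)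
    _ = (r+1)^2/m * I := by ring

end Aux

section Scaling
variable {a b : ℝ}

lemma phi_me (hab : a < b) : MeasurableEmbedding (fun u : ℝ => (b - a) * u + a) := by
  have h : (fun u : ℝ => (b - a) * u + a)
      = (fun x : ℝ => x + a) ∘ (fun u : ℝ => (b - a) * u) := rfl
  rw [h]
  exact (Homeomorph.addRight a).measurableEmbedding.comp
    (Homeomorph.mulLeft₀ (b - a) (by intro h'; linarith [sub_eq_zero.mp h'])).measurableEmbedding

lemma phi_preim (hab : a < b) :
    (fun u : ℝ => (b - a) * u + a) ⁻¹' Set.Ioo a b = Set.Ioo 0 1 := by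
  ext u
  simp only [Set.mem_preimage, Set.mem_Ioo]
  constructor
  · rintro ⟨h1, h2⟩
    constructor <;> nlinarith
  · rintro ⟨h1, h2⟩
    constructor <;> nlinarith

lemma restrict_eq_smul_map (hab : a < b) :
    volume.restrict (Set.Ioo a b) = ENNReal.ofReal (b - a) •
      Measure.map (fun u : ℝ => (b - a) * u + a) (volume.restrict (Set.Ioo 0 1)) := by
  have hme := phi_me hab
  rw [← phi_preim hab, ← hme.restrict_map]
  have hmap : Measure.map (fun u : ℝ => (b - a) * u + a) volume
      = ENNReal.ofReal (b - a)⁻¹ • volume := by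
    have h : (fun u : ℝ => (b - a) * u + a)
        = (fun x : ℝ => x + a) ∘ (fun u : ℝ => (b - a) * u) := rfl
    rw [h, ← Measure.map_map (by fun_prop) (by fun_prop),
      Real.map_volume_mul_left (sub_ne_zero.2 hab.ne'), Measure.map_smul,
      map_add_right_eq_self volume a, abs_of_pos (inv_pos.2 (sub_pos.2 hab))]
  rw [hmap, Measure.restrict_smul, smul_smul, ← ENNReal.ofReal_mul (by linarith)]
  rw [mul_inv_cancel₀ (sub_ne_zero.2 hab.ne')]
  simp

lemma eLpNorm_scal (hab : a < b) (s : ℝ≥0∞) (f : ℝ → ℝ) :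
    eLpNorm f s (volume.restrict (Set.Ioo a b))
      = ENNReal.ofReal (b - a) ^ (1 / s).toReal *
        eLpNorm (fun u => f ((b - a) * u + a)) s (volume.restrict (Set.Ioo 0 1)) := by
  rw [restrict_eq_smul_map hab,
    eLpNorm_smul_measure_of_ne_zero (by simp [hab] : ENNReal.ofReal (b-a) ≠ 0),
    (phi_me hab).eLpNorm_map_measure]
  rfl

lemma integral_scal (hab : a < b) (F : ℝ → ℝ) :
    ∫ t in Set.Ioo a b, F t = (b - a) * ∫ u in Set.Ioo (0:ℝ) 1, F ((b - a) * u + a) := by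
  rw [restrict_eq_smul_map hab, integral_smul_measure, (phi_me hab).integral_map]
  rw [ENNReal.toReal_ofReal (by linarith)]
  rfl

end Scaling

/-- From orthogonality against monomials of degree `≤ r` to orthogonality against all
polynomials of degree at most `r`. -/
lemma orth_poly {r : ℕ} {a b : ℝ} (ψ : ℝ → ℝ) (hψ : ContinuousOn ψ (Set.Icc a b))
    (g : Polynomial ℝ)
    (horth : ∀ j : ℕ, j ≤ r → ∫ t in Set.Ioo a b, (ψ t - g.eval t) * t ^ j = 0)
    (p : Polynomial ℝ) (hp : p.natDegree ≤ r) :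
    ∫ t in Set.Ioo a b, (ψ t - g.eval t) * p.eval t = 0 := by
  have hint : ∀ j : ℕ, IntegrableOn (fun t => (ψ t - g.eval t) * t ^ j) (Set.Ioo a b) := by
    intro j
    apply (ContinuousOn.integrableOn_Icc ?_).mono_set Set.Ioo_subset_Icc_self
    exact ((hψ.sub (g.continuous_aeval.continuousOn)).mul (by fun_prop))
  have hev : ∀ t : ℝ, (ψ t - g.eval t) * p.eval t
      = ∑ j ∈ Finset.range (r+1), p.coeff j * ((ψ t - g.eval t) * t ^ j) := by
    intro t
    rw [Polynomial.eval_eq_sum_range' (Nat.lt_succ_of_le hp), Finset.mul_sum]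
    congr 1; ext j; ring
  simp_rw [hev]
  rw [integral_finset_sum]
  · apply Finset.sum_eq_zero
    intro j hj
    rw [integral_const_mul, horth j (Nat.lt_succ_iff.mp (Finset.mem_range.mp hj)), mul_zero]
  · intro j _
    exact (hint j).const_mul _

/-- Stability of the `L²(a,b)`-orthogonal projection onto polynomials of degree at most `r`
in the `L^s` norm: there is `C > 0`, depending only on `r` and `s`, such that for all
`a < b`, continuous `ψ : [a, b] → ℝ`, and polynomial `g` of degree at most `r` with
`∫_a^b (ψ − g) t^j dt = 0` for all `0 ≤ j ≤ r`, one has `‖g‖_{L^s} ≤ C ‖ψ‖_{L^s}`. -/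
theorem L2_projection_Ls_stability (r : ℕ) (s : ℝ≥0∞) (hs : 1 ≤ s) :
    ∃ C : ℝ, 0 < C ∧ ∀ a b : ℝ, a < b → ∀ ψ : ℝ → ℝ,
      ContinuousOn ψ (Set.Icc a b) →
      ∀ g : Polynomial ℝ, g.natDegree ≤ r →
        (∀ j : ℕ, j ≤ r → ∫ t in Set.Ioo a b, (ψ t - g.eval t) * t ^ j = 0) →
        eLpNorm (fun t => g.eval t) s (volume.restrict (Set.Ioo a b)) ≤
          ENNReal.ofReal C * eLpNorm ψ s (volume.restrict (Set.Ioo a b)) := by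
  obtain ⟨K, hK, hcore⟩ := core_estimate r
  refine ⟨K, hK, fun a b hab ψ hψ g hg horth => ?_⟩
  set μ₀ := volume.restrict (Set.Ioo (0:ℝ) 1) with hμ₀
  haveI : IsProbabilityMeasure μ₀ := ⟨by rw [hμ₀]; simp⟩
  set φ : ℝ → ℝ := fun u => (b - a) * u + a with hφ
  have hba : (0:ℝ) < b - a := sub_pos.2 hab
  -- transformed data
  set ψ' : ℝ → ℝ := fun u => ψ (φ u) with hψ'
  set g' : Polynomial ℝ := g.comp (Polynomial.C (b - a) * Polynomial.X + Polynomial.C a)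
    with hg'
  have hφmaps : Set.MapsTo φ (Set.Icc (0:ℝ) 1) (Set.Icc a b) := by
    intro u hu
    simp only [Set.mem_Icc] at hu ⊢
    simp only [hφ]
    constructor <;> nlinarith [hu.1, hu.2, hba]
  have hψ'cont : ContinuousOn ψ' (Set.Icc 0 1) :=
    hψ.comp (by fun_prop : Continuous φ).continuousOn hφmaps
  have hg'eval : ∀ u : ℝ, g'.eval u = g.eval (φ u) := by
    intro u
    rw [hg', Polynomial.eval_comp]
    simp [hφ]
  have hg'deg : g'.natDegree ≤ r := by
    calc g'.natDegree ≤ g.natDegree *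
        (Polynomial.C (b - a) * Polynomial.X + Polynomial.C a).natDegree :=
          Polynomial.natDegree_comp_le
      _ ≤ r * 1 := by
          apply Nat.mul_le_mul hg
          apply le_trans (Polynomial.natDegree_add_le _ _)
          simp only [Polynomial.natDegree_C, max_le_iff]
          exact ⟨le_trans (Polynomial.natDegree_C_mul_le _ _) (by simp), by simp⟩
      _ = r := mul_one r
  -- orthogonality on (0,1)
  have horth' : ∀ p : Polynomial ℝ, p.natDegree ≤ r →
      ∫ u in Set.Ioo (0:ℝ) 1, (ψ' u - g'.eval u) * p.eval u = 0 := by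
    intro p hp
    set inv : Polynomial ℝ := Polynomial.C (b - a)⁻¹ * (Polynomial.X - Polynomial.C a)
      with hinv
    have hinveval : ∀ u : ℝ, inv.eval (φ u) = u := by
      intro u
      rw [hinv]
      simp only [Polynomial.eval_mul, Polynomial.eval_C, Polynomial.eval_sub,
        Polynomial.eval_X, hφ]
      field_simp
      ring
    have hPbdeg : (p.comp inv).natDegree ≤ r := by
      calc (p.comp inv).natDegree ≤ p.natDegree * inv.natDegree :=
          Polynomial.natDegree_comp_le
        _ ≤ r * 1 := by
            apply Nat.mul_le_mul hp
            rw [hinv]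
            exact le_trans (Polynomial.natDegree_C_mul_le _ _)
              (le_of_eq (Polynomial.natDegree_X_sub_C a))
        _ = r := mul_one r
    have h0 : ∫ t in Set.Ioo a b, (ψ t - g.eval t) * (p.comp inv).eval t = 0 :=
      orth_poly ψ hψ g horth (p.comp inv) hPbdeg
    rw [integral_scal hab] at h0
    have hee : ∀ u : ℝ, (ψ (φ u) - g.eval (φ u)) * (p.comp inv).eval (φ u)
        = (ψ' u - g'.eval u) * p.eval u := by
      intro u
      rw [Polynomial.eval_comp, hinveval u, hg'eval u]
    simp only [hφ] at hee h0
    have := h0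
    rw [show (∫ u in Set.Ioo (0:ℝ) 1,
        (ψ ((b-a)*u+a) - Polynomial.eval ((b-a)*u+a) g) *
          Polynomial.eval ((b-a)*u+a) (p.comp inv))
        = ∫ u in Set.Ioo (0:ℝ) 1, (ψ' u - g'.eval u) * p.eval u from
        integral_congr_ae (Filter.Eventually.of_forall fun u => hee u)] at this
    rcases mul_eq_zero.mp this with h | h
    · exact absurd h hba.ne'
    · exact h
  -- pointwise bound on (0,1)
  set I : ℝ := ∫ u in Set.Ioo (0:ℝ) 1, |ψ' u| with hIdef
  have hIb : ∀ u ∈ Set.Icc (0:ℝ) 1, |g'.eval u| ≤ K * I :=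
    hcore ψ' hψ'cont g' hg'deg horth'
  have hInn : 0 ≤ I := setIntegral_nonneg measurableSet_Ioo (fun x _ => abs_nonneg _)
  -- measurability of ψ' on μ₀
  have hψ'aesm : AEStronglyMeasurable ψ' μ₀ :=
    (hψ'cont.mono Set.Ioo_subset_Icc_self).aestronglyMeasurable measurableSet_Ioo
  have hψ'int : Integrable ψ' μ₀ :=
    (hψ'cont.integrableOn_Icc).mono_set Set.Ioo_subset_Icc_self
  -- eLpNorm chain on (0,1)
  have hchain : eLpNorm (fun u => g'.eval u) s μ₀ ≤
      ENNReal.ofReal K * eLpNorm ψ' s μ₀ := by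
    have h1 : eLpNorm (fun u => g'.eval u) s μ₀ ≤ ENNReal.ofReal (K * I) := by
      have hb : ∀ᵐ u ∂μ₀, ‖g'.eval u‖ ≤ K * I := by
        rw [hμ₀]
        filter_upwards [ae_restrict_mem measurableSet_Ioo] with u hu
        rw [Real.norm_eq_abs]
        exact hIb u (Set.mem_Icc_of_Ioo hu)
      calc eLpNorm (fun u => g'.eval u) s μ₀
          ≤ μ₀ Set.univ ^ s.toReal⁻¹ * ENNReal.ofReal (K * I) := eLpNorm_le_of_ae_bound hb
        _ = ENNReal.ofReal (K * I) := by
            rw [measure_univ, ENNReal.one_rpow, one_mul]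
    have h2 : ENNReal.ofReal (K * I) = ENNReal.ofReal K * eLpNorm ψ' 1 μ₀ := by
      rw [ENNReal.ofReal_mul hK.le]
      congr 1
      rw [eLpNorm_one_eq_lintegral_enorm,
        ← ofReal_integral_norm_eq_lintegral_enorm hψ'int]
      simp [hIdef, Real.norm_eq_abs]
      rfl
    have h3 : eLpNorm ψ' 1 μ₀ ≤ eLpNorm ψ' s μ₀ :=
      eLpNorm_le_eLpNorm_of_exponent_le hs hψ'aesm
    calc eLpNorm (fun u => g'.eval u) s μ₀ ≤ ENNReal.ofReal (K * I) := h1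
      _ = ENNReal.ofReal K * eLpNorm ψ' 1 μ₀ := h2
      _ ≤ ENNReal.ofReal K * eLpNorm ψ' s μ₀ := mul_le_mul_right h3 _
  -- undo the scaling
  have hgl : eLpNorm (fun t => g.eval t) s (volume.restrict (Set.Ioo a b))
      = ENNReal.ofReal (b - a) ^ (1 / s).toReal * eLpNorm (fun u => g'.eval u) s μ₀ := by
    rw [eLpNorm_scal hab s (fun t => g.eval t), hμ₀]
    congr 1
    apply eLpNorm_congr_ae
    filter_upwards with u
    rw [hg'eval u]
  have hpl : eLpNorm ψ s (volume.restrict (Set.Ioo a b))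
      = ENNReal.ofReal (b - a) ^ (1 / s).toReal * eLpNorm ψ' s μ₀ := by
    rw [eLpNorm_scal hab s ψ, hμ₀]
  rw [hgl, hpl]
  calc ENNReal.ofReal (b - a) ^ (1 / s).toReal * eLpNorm (fun u => g'.eval u) s μ₀
      ≤ ENNReal.ofReal (b - a) ^ (1 / s).toReal * (ENNReal.ofReal K * eLpNorm ψ' s μ₀) :=
        mul_le_mul_right hchain _
    _ = ENNReal.ofReal K * (ENNReal.ofReal (b - a) ^ (1 / s).toReal * eLpNorm ψ' s μ₀) := by
        ring
end
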